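/- Let d ≥ 3 be an integer, let G be a simple d-regular graph with adjacency matrix A, let x be a vertex of G, and let k ≥ 1 be an integer such that the ball B_k(x) is acyclic. Then for every integer m with 0 ≤ m ≤ 2k, the number of closed walks of length m in G starting and ending at x equals the m-th moment of the Kesten–McKay measure: (A^m)_{xx} = ∫_ℝ λ^m σ_0(dλ). -/

import Mathlib

open MeasureTheory Filter

noncomputable section

/-- The density of the Kesten–McKay measure of degree `d`. -/
def kmDensity (d : ℕ) (l : ℝ) : ℝ :=
  if l ^ 2 < 4 * ((d : ℝ) - 1) then
    ((d : ℝ) / (2 * Real.pi)) * Real.sqrt (4 * ((d : ℝ) - 1) - l ^ 2) / ((d : ℝ) ^ 2 - l ^ 2)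
  else 0

/-- The cumulative distribution function `σ₀((-∞, t])` of the Kesten–McKay measure. -/
def kmCDF (d : ℕ) (t : ℝ) : ℝ := ∫ l in Set.Iic t, kmDensity d l

/-- The Kesten–McKay measure of degree `d`. -/
def kmMeasure (d : ℕ) : Measure ℝ :=
  MeasureTheory.volume.withDensity fun l => ENNReal.ofReal (kmDensity d l)

/-- The bound `γ_d` on the density of the Kesten–McKay measure. -/
def gammaD (d : ℕ) : ℝ :=
  if d ≤ 6 then (d : ℝ) / (4 * Real.pi * Real.sqrt ((d : ℝ) ^ 2 - 4 * ((d : ℝ) - 1)))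
  else Real.sqrt ((d : ℝ) - 1) / ((d : ℝ) * Real.pi)

/-- The density of the rescaled Kesten–McKay measure of degree `d`. -/
def kmrDensity (d : ℕ) (l : ℝ) : ℝ :=
  if l ^ 2 < 1 then
    (2 / Real.pi) * (((d : ℝ) * ((d : ℝ) - 1)) / ((d : ℝ) ^ 2 - 4 * ((d : ℝ) - 1) * l ^ 2)) *
      Real.sqrt (1 - l ^ 2)
  else 0

/-- The CDF of the rescaled Kesten–McKay measure. -/
def kmrCDF (d : ℕ) (t : ℝ) : ℝ := ∫ l in Set.Iic t, kmrDensity d l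

/-- The density of the semicircle measure. -/
def scDensity (l : ℝ) : ℝ := if l ^ 2 < 1 then (2 / Real.pi) * Real.sqrt (1 - l ^ 2) else 0

/-- The CDF of the semicircle measure. -/
def scCDF (t : ℝ) : ℝ := ∫ l in Set.Iic t, scDensity l

/-- The semicircle measure. -/
def scMeasure : Measure ℝ :=
  MeasureTheory.volume.withDensity fun l => ENNReal.ofReal (scDensity l)

/-- The bound `γ̃_d` on the density of the rescaled Kesten–McKay measure. -/
def gammaTilde (d : ℕ) : ℝ :=
  if d ≤ 6 then
    (d : ℝ) * Real.sqrt ((d : ℝ) - 1) /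
      (2 * Real.pi * Real.sqrt ((d : ℝ) ^ 2 - 4 * ((d : ℝ) - 1)))
  else 2 * ((d : ℝ) - 1) / (Real.pi * (d : ℝ))

/-- The Stieltjes transform `Γ_{𝒯_d}(z) = ∫ (λ - z)⁻¹ σ₀(dλ)` of the Kesten–McKay measure. -/
def kmStieltjes (d : ℕ) (z : ℂ) : ℂ := ∫ l : ℝ, ((l : ℂ) - z)⁻¹ ∂(kmMeasure d)

/-- The Stieltjes transform `Γ_sc(z) = ∫ (λ - z)⁻¹ σ_sc(dλ)` of the semicircle measure. -/
def scStieltjes (z : ℂ) : ℂ := ∫ l : ℝ, ((l : ℂ) - z)⁻¹ ∂scMeasure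

open Classical in
/-- The set `𝒢_{n,d}` of simple `d`-regular graphs on `n` vertices. -/
def regSet (n d : ℕ) : Finset (SimpleGraph (Fin n)) :=
  Finset.univ.filter fun G => G.IsRegularOfDegree d

open Classical in
/-- The uniform probability `𝒫_{n,d}` of an event `P` on `𝒢_{n,d}`. -/
def regProb (n d : ℕ) (P : SimpleGraph (Fin n) → Prop) : ℝ :=
  (((regSet n d).filter P).card : ℝ) / ((regSet n d).card : ℝ)

open Classical in
/-- The uniform expectation `ℰ_{n,d}` of a function `f` on `𝒢_{n,d}`. -/
def regExp (n d : ℕ) (f : SimpleGraph (Fin n) → ℝ) : ℝ :=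
  (∑ G ∈ regSet n d, f G) / ((regSet n d).card : ℝ)

/-- The adjacency matrix of a simple graph is hermitian (as a real matrix). -/
theorem adjMatrix_isHermitian {n : ℕ} (G : SimpleGraph (Fin n)) [DecidableRel G.Adj] :
    (G.adjMatrix ℝ).IsHermitian := by
  unfold Matrix.IsHermitian
  rw [Matrix.conjTranspose_eq_transpose_of_trivial]
  exact G.isSymm_adjMatrix

/-- The local spectral measure of `(-∞, t]` at a vertex `x`:
`μ_{n,x}((-∞,t]) = ∑_{j : λ_j ≤ t} |φ_j(x)|²`. -/
def localCDF {n : ℕ} {A : Matrix (Fin n) (Fin n) ℝ} (hA : A.IsHermitian) (x : Fin n)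
    (t : ℝ) : ℝ :=
  ∑ j, if hA.eigenvalues j ≤ t then (hA.eigenvectorBasis j x) ^ 2 else 0

open Classical in
/-- The number of eigenvalues (with multiplicity) lying in a set `I ⊂ ℝ`. -/
def eigCount {n : ℕ} {A : Matrix (Fin n) (Fin n) ℝ} (hA : A.IsHermitian) (I : Set ℝ) : ℕ :=
  (Finset.univ.filter fun j => hA.eigenvalues j ∈ I).card

/-- The Green function `Γ(x,z) = ∑_j |φ_j(x)|²/(λ_j - z)`. -/
def greenFn {n : ℕ} {A : Matrix (Fin n) (Fin n) ℝ} (hA : A.IsHermitian) (x : Fin n)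
    (z : ℂ) : ℂ :=
  ∑ j, (((hA.eigenvectorBasis j x : ℝ) ^ 2 : ℂ)) / (((hA.eigenvalues j : ℝ) : ℂ) - z)

open Classical in
/-- `μ_{n,x}((-∞,t])` for the adjacency matrix of `G`. -/
def adjCDF {n : ℕ} (G : SimpleGraph (Fin n)) (x : Fin n) (t : ℝ) : ℝ :=
  localCDF (adjMatrix_isHermitian G) x t

open Classical in
/-- `𝒩_I(G_n)` for the adjacency matrix of `G`. -/
def adjEigCount {n : ℕ} (G : SimpleGraph (Fin n)) (I : Set ℝ) : ℕ :=
  eigCount (adjMatrix_isHermitian G) I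

open Classical in
/-- `Γ_n(x,z)` for the adjacency matrix of `G`. -/
def adjGreen {n : ℕ} (G : SimpleGraph (Fin n)) (x : Fin n) (z : ℂ) : ℂ :=
  greenFn (adjMatrix_isHermitian G) x z

open Classical in
/-- The rescaled adjacency matrix `Ã_n = A_n / (2√(d-1))`. -/
def radjMatrix {n : ℕ} (d : ℕ) (G : SimpleGraph (Fin n)) : Matrix (Fin n) (Fin n) ℝ :=
  (2 * Real.sqrt ((d : ℝ) - 1))⁻¹ • G.adjMatrix ℝ

open Classical in
theorem radjMatrix_isHermitian {n : ℕ} (d : ℕ) (G : SimpleGraph (Fin n)) :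
    (radjMatrix d G).IsHermitian := by
  have h := adjMatrix_isHermitian G
  unfold radjMatrix
  show _ = _
  rw [Matrix.conjTranspose_smul, h]
  simp

open Classical in
/-- `μ̃_{n,x}((-∞,t])` for the rescaled adjacency matrix of `G`. -/
def radjCDF {n : ℕ} (d : ℕ) (G : SimpleGraph (Fin n)) (x : Fin n) (t : ℝ) : ℝ :=
  localCDF (radjMatrix_isHermitian d G) x t

open Classical in
/-- `𝒩̃_I(G_n)` for the rescaled adjacency matrix of `G`. -/
def radjEigCount {n : ℕ} (d : ℕ) (G : SimpleGraph (Fin n)) (I : Set ℝ) : ℕ :=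
  eigCount (radjMatrix_isHermitian d G) I

open Classical in
/-- `Γ̃_n(x,z)` for the rescaled adjacency matrix of `G`. -/
def radjGreen {n : ℕ} (d : ℕ) (G : SimpleGraph (Fin n)) (x : Fin n) (z : ℂ) : ℂ :=
  greenFn (radjMatrix_isHermitian d G) x z

/-- The ball `B_k(x)` of a graph `G` around a vertex `x`, viewed as a (spanning) subgraph:
its edges are the edges of `G` incident to at least one vertex at distance `< k` from `x`. -/
def ballGraph {n : ℕ} (G : SimpleGraph (Fin n)) (x : Fin n) (k : ℕ) : SimpleGraph (Fin n) where
  Adj u v := G.Adj u v ∧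
    ((G.Reachable x u ∧ G.dist x u < k) ∨ (G.Reachable x v ∧ G.dist x v < k))
  symm := by
    constructor
    intro u v h
    exact ⟨h.1.symm, h.2.symm⟩
  loopless := by
    constructor
    intro u h
    exact G.irrefl h.1

/-- `R(x)`, the largest `k` such that `B_k(x)` is acyclic. -/
def Rmax {n : ℕ} (G : SimpleGraph (Fin n)) (x : Fin n) : ℕ :=
  sSup {k | (ballGraph G x k).IsAcyclic}

/-- `R(x)* = R(x)` if `R(x)` is odd, and `R(x) - 1` if `R(x)` is even. -/
def Rstar {n : ℕ} (G : SimpleGraph (Fin n)) (x : Fin n) : ℕ :=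
  if Odd (Rmax G x) then Rmax G x else Rmax G x - 1

open Classical in
/-- The number of cycles of length `k` in `G`, counted as subgraphs (i.e. two cycles are
identified when they traverse the same set of edges). -/
def numCycles {n : ℕ} (G : SimpleGraph (Fin n)) (k : ℕ) : ℕ :=
  Set.ncard {s : Finset (Sym2 (Fin n)) |
    ∃ (x : Fin n) (w : G.Walk x x), w.IsCycle ∧ w.length = k ∧ w.edges.toFinset = s}

open Classical in
/-- `|F_n(k)|`, the number of vertices `x` of `G` whose ball `B_k(x)` is acyclic. -/
def acyclicBallCount {n : ℕ} (G : SimpleGraph (Fin n)) (k : ℕ) : ℕ :=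
  (Finset.univ.filter fun x : Fin n => (ballGraph G x k).IsAcyclic).card

open Classical in
/-- `G` is `d`-regular (with classical decidability). -/
def isReg {n : ℕ} (G : SimpleGraph (Fin n)) (d : ℕ) : Prop :=
  G.IsRegularOfDegree d



open Finset Real MeasureTheory Filter intervalIntegral Polynomial Polynomial.Chebyshev SimpleGraph
open scoped Classical

namespace KM17

section


/-- Jacobi-recursion coefficients: `l^m = ∑ j, cc D m j * qq D j l`. -/
def cc (D : ℝ) : ℕ → ℕ → ℝ
  | 0, j => if j = 0 then 1 else 0
  | m+1, j => if j = 0 then D * cc D m 1 else cc D m (j-1) + (D-1) * cc D m (j+1)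

/-- Sphere sizes in the `d`-regular tree. -/
def nn (D : ℝ) : ℕ → ℝ
  | 0 => 1
  | j+1 => D * (D-1)^j

/-- Rescaled Chebyshev-U polynomials. -/
def uu (D : ℝ) : ℕ → ℝ → ℝ
  | 0, _ => 1
  | 1, l => l
  | (j+2), l => l * uu D (j+1) l - (D-1) * uu D j l

/-- The orthogonal polynomials of the Kesten–McKay measure. -/
def qq (D : ℝ) : ℕ → ℝ → ℝ
  | 0, _ => 1
  | 1, l => l
  | 2, l => l^2 - D
  | (j+3), l => l * qq D (j+2) l - (D-1) * qq D (j+1) l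

def bb (D : ℝ) : ℕ → ℝ
  | 0 => 0
  | 1 => D
  | _+2 => D-1

variable {D : ℝ}

lemma qq_eq_uu (D : ℝ) : ∀ j l, qq D (j+2) l = uu D (j+2) l - uu D j l := by
  intro j
  induction j using Nat.strong_induction_on with
  | _ j ih =>
    match j with
    | 0 => intro l; simp [qq, uu]; ring
    | 1 => intro l; simp [qq, uu]; ring
    | (j+2) =>
      intro l
      have h1 := ih (j+1) (by omega) l
      have h2 := ih j (by omega) l
      show qq D (j+4) l = uu D (j+4) l - uu D (j+2) l
      have e1 : qq D (j+4) l = l * qq D (j+3) l - (D-1) * qq D (j+2) l := rfl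
      have e2 : uu D (j+4) l = l * uu D (j+3) l - (D-1) * uu D (j+2) l := rfl
      have e3 : uu D (j+2) l = l * uu D (j+1) l - (D-1) * uu D j l := rfl
      rw [e1, h1, h2, e2, e3]
      ring

lemma lqq (D : ℝ) : ∀ j l, l * qq D j l = qq D (j+1) l + bb D j * qq D (j-1) l := by
  intro j l
  match j with
  | 0 => simp [qq, bb]
  | 1 => simp [qq, bb]; ring
  | (j+2) =>
    have e1 : qq D (j+3) l = l * qq D (j+2) l - (D-1) * qq D (j+1) l := rfl
    show l * qq D (j+2) l = qq D (j+3) l + bb D (j+2) * qq D (j+1) l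
    rw [e1]
    show l * qq D (j+2) l = l * qq D (j+2) l - (D-1) * qq D (j+1) l + (D-1) * qq D (j+1) l
    ring

lemma cc_eq_zero (D : ℝ) : ∀ m j, m < j → cc D m j = 0 := by
  intro m
  induction m with
  | zero => intro j hj; simp [cc]; omega
  | succ m ih =>
    intro j hj
    have hj0 : j ≠ 0 := by omega
    simp only [cc, if_neg hj0]
    rw [ih (j-1) (by omega), ih (j+1) (by omega)]
    ring

lemma pow_eq_sum_cc_qq (D : ℝ) : ∀ m l, l ^ m = ∑ j ∈ range (m+1), cc D m j * qq D j l := by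
  intro m
  induction m with
  | zero => intro l; simp [cc, qq]
  | succ m ih =>
    intro l
    have step : l ^ (m+1) = ∑ j ∈ range (m+1), cc D m j * (l * qq D j l) := by
      rw [pow_succ, ih l, Finset.sum_mul]
      congr 1; ext j; ring
    rw [step]
    have expand : ∀ j ∈ range (m+1), cc D m j * (l * qq D j l)
        = cc D m j * qq D (j+1) l + cc D m j * bb D j * qq D (j-1) l := by
      intro j _; rw [lqq]; ring
    rw [Finset.sum_congr rfl expand, Finset.sum_add_distrib]
    -- first sum: ∑_{j∈range(m+1)} cc m j qq (j+1) = ∑_{i∈range(m+2), i≥1} cc m (i-1) qq i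
    have s1 : ∑ j ∈ range (m+1), cc D m j * qq D (j+1) l
        = ∑ i ∈ range (m+2), (if i = 0 then 0 else cc D m (i-1) * qq D i l) := by
      rw [Finset.sum_range_succ' (fun i => if i = 0 then 0 else cc D m (i-1) * qq D i l) (m+1)]
      simp
    -- second sum: ∑_{j∈range(m+1)} cc m j bb j qq (j-1) = ∑ i∈range(m+2), cc m (i+1) bb (i+1) qq i
    have s2 : ∑ j ∈ range (m+1), cc D m j * bb D j * qq D (j-1) l
        = ∑ i ∈ range (m+2), cc D m (i+1) * bb D (i+1) * qq D i l := by
      have hbb0 : bb D 0 = 0 := rfl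
      rw [Finset.sum_range_succ' (fun j => cc D m j * bb D j * qq D (j-1) l) m]
      conv_rhs => rw [Finset.sum_range_succ, Finset.sum_range_succ]
      rw [cc_eq_zero D m (m+1) (by omega), cc_eq_zero D m (m+2) (by omega)]
      simp [hbb0]
    rw [s1, s2, ← Finset.sum_add_distrib]
    apply Finset.sum_congr rfl
    intro i _
    by_cases hi : i = 0
    · subst hi
      simp only [if_pos]
      have hc : cc D (m+1) 0 = D * cc D m 1 := by simp [cc]
      have hb1 : bb D 1 = D := rfl
      rw [hc, hb1]; ring
    · simp only [if_neg hi]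
      have : cc D (m+1) i = cc D m (i-1) + (D-1) * cc D m (i+1) := by
        simp [cc, if_neg hi]
      rw [this]
      obtain ⟨i', rfl⟩ : ∃ i', i = i' + 1 := ⟨i - 1, by omega⟩
      have : bb D (i'+1+1) = D - 1 := rfl
      rw [this]
      simp only [Nat.add_sub_cancel]
      ring

/-- The weighted sums. -/
def Sab (D : ℝ) (a b N : ℕ) : ℝ := ∑ j ∈ range N, cc D a j * cc D b j * nn D j

lemma nn_succ_succ (D : ℝ) (j : ℕ) : nn D (j+2) = (D-1) * nn D (j+1) := by
  show D * (D-1)^(j+1) = (D-1) * (D * (D-1)^j)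
  ring

lemma Sab_comm (D : ℝ) (a b N : ℕ) : Sab D a b N = Sab D b a N := by
  unfold Sab; apply Finset.sum_congr rfl; intro j _; ring

lemma Sab_swap (D : ℝ) (a b N : ℕ) (ha : a + 2 ≤ N) (hb : b + 2 ≤ N) :
    Sab D (a+1) b N = Sab D a (b+1) N := by
  have key : ∀ c e : ℕ, e + 2 ≤ N → Sab D (c+1) e N
      = ∑ j ∈ range N, (cc D c j * cc D e (j+1) + cc D c (j+1) * cc D e j) * nn D (j+1) := by
    intro c e heN
    unfold Sab
    have expand : ∀ j ∈ range N, cc D (c+1) j * cc D e j * nn D j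
        = (if j = 0 then 0 else cc D c (j-1) * cc D e j * nn D j)
          + cc D c (j+1) * cc D e j * nn D (j+1) := by
      intro j _
      by_cases hj : j = 0
      · subst hj
        simp only [if_pos]
        show cc D (c+1) 0 * cc D e 0 * nn D 0 = 0 + cc D c 1 * cc D e 0 * nn D 1
        have h1 : cc D (c+1) 0 = D * cc D c 1 := by simp [cc]
        have h2 : nn D 0 = 1 := rfl
        have h3 : nn D 1 = D * (D-1)^0 := rfl
        rw [h1, h2, h3]; ring
      · simp only [if_neg hj]
        have h1 : cc D (c+1) j = cc D c (j-1) + (D-1) * cc D c (j+1) := by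
          simp [cc, if_neg hj]
        obtain ⟨j', rfl⟩ : ∃ j', j = j' + 1 := ⟨j - 1, by omega⟩
        rw [h1, nn_succ_succ]
        simp only [Nat.add_sub_cancel]
        ring
    rw [Finset.sum_congr rfl expand, Finset.sum_add_distrib]
    have s1 : ∑ j ∈ range N, (if j = 0 then 0 else cc D c (j-1) * cc D e j * nn D j)
        = ∑ j ∈ range N, cc D c j * cc D e (j+1) * nn D (j+1) := by
      obtain ⟨N', rfl⟩ : ∃ N', N = N' + 1 := ⟨N - 1, by omega⟩
      rw [Finset.sum_range_succ' (fun j => if j = 0 then 0 else cc D c (j-1) * cc D e j * nn D j) N']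
      simp only [if_pos, Nat.add_sub_cancel, if_neg (Nat.succ_ne_zero _), add_zero]
      conv_rhs => rw [Finset.sum_range_succ]
      rw [cc_eq_zero D e (N'+1) (by omega)]
      simp
    rw [s1]
    have split : (∑ j ∈ range N, (cc D c j * cc D e (j+1) + cc D c (j+1) * cc D e j) * nn D (j+1))
        = (∑ j ∈ range N, cc D c j * cc D e (j+1) * nn D (j+1))
          + ∑ j ∈ range N, cc D c (j+1) * cc D e j * nn D (j+1) := by
      rw [← Finset.sum_add_distrib]
      exact Finset.sum_congr rfl (by intros; ring)
    rw [split]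
  rw [key a b hb]
  rw [show Sab D a (b+1) N = Sab D (b+1) a N from Sab_comm D a (b+1) N, key b a ha]
  exact Finset.sum_congr rfl (by intros; ring)

lemma Sab_eq (D : ℝ) : ∀ a b N, a + b + 2 ≤ N → Sab D a b N = cc D (a+b) 0 := by
  intro a
  induction a with
  | zero =>
    intro b N hN
    unfold Sab
    obtain ⟨N', rfl⟩ : ∃ N', N = N' + 1 := ⟨N - 1, by omega⟩
    rw [Finset.sum_range_succ' (fun j => cc D 0 j * cc D b j * nn D j) N']
    have : ∀ j, cc D 0 (j+1) = 0 := by intro j; simp [cc]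
    simp only [this, zero_mul, mul_zero, Finset.sum_const_zero, zero_add]
    have h0 : cc D 0 0 = 1 := by simp [cc]
    have h1 : nn D 0 = 1 := rfl
    rw [h0, h1]; ring
  | succ a ih =>
    intro b N hN
    rw [Sab_swap D a b N (by omega) (by omega), ih (b+1) N (by omega)]
    congr 1
    omega


end
section


/-- `√(d-1)`. -/
def sD (d : ℕ) : ℝ := Real.sqrt ((d:ℝ) - 1)

lemma hD3 {d : ℕ} (hd : 3 ≤ d) : (3:ℝ) ≤ (d:ℝ) := by exact_mod_cast hd

lemma sD_sq {d : ℕ} (hd : 3 ≤ d) : sD d ^ 2 = (d:ℝ) - 1 :=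
  Real.sq_sqrt (by have := hD3 hd; linarith)

lemma sD_one_le {d : ℕ} (hd : 3 ≤ d) : 1 ≤ sD d := by
  rw [show (1:ℝ) = Real.sqrt 1 by simp [Real.sqrt_one]]
  exact Real.sqrt_le_sqrt (by have := hD3 hd; linarith)

lemma sD_pos {d : ℕ} (hd : 3 ≤ d) : 0 < sD d := lt_of_lt_of_le one_pos (sD_one_le hd)

lemma uu_cheb {d : ℕ} (hd : 3 ≤ d) : ∀ (j : ℕ) (x : ℝ),
    uu (d:ℝ) j (2 * sD d * x) = sD d ^ j * (U ℝ (j:ℤ)).eval x := by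
  intro j
  induction j using Nat.strong_induction_on with
  | _ j ih =>
    match j with
    | 0 => intro x; simp [uu, U_zero]
    | 1 => intro x; simp [uu, U_one]; ring
    | (j+2) =>
      intro x
      have h1 := ih (j+1) (by omega) x
      have h2 := ih j (by omega) x
      have e : uu (d:ℝ) (j+2) (2 * sD d * x)
          = (2 * sD d * x) * uu (d:ℝ) (j+1) (2 * sD d * x)
            - ((d:ℝ)-1) * uu (d:ℝ) j (2 * sD d * x) := rfl
      have hU : (U ℝ ((j:ℤ)+2)) = 2 * X * U ℝ ((j:ℤ)+1) - U ℝ (j:ℤ) := U_add_two ℝ (j:ℤ)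
      have hcast : ((j+2 : ℕ) : ℤ) = (j:ℤ) + 2 := by push_cast; ring
      have hcast1 : ((j+1 : ℕ) : ℤ) = (j:ℤ) + 1 := by push_cast; ring
      rw [e, h1, h2, hcast, hU]
      simp only [eval_sub, eval_mul, eval_ofNat, eval_X, hcast1]
      have hs := sD_sq hd
      linear_combination (sD d ^ j * Polynomial.eval x (U ℝ (j:ℤ))) * hs

lemma T_bound {d : ℕ} (n : ℤ) {x : ℝ} (hx : x ∈ Set.Icc (-1:ℝ) 1) :
    |(T ℝ n).eval x| ≤ 1 := by
  obtain ⟨hx1, hx2⟩ := hx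
  have : x = Real.cos (Real.arccos x) := (Real.cos_arccos hx1 hx2).symm
  rw [this, T_real_cos]
  exact Real.abs_cos_le_one _

lemma U_bound : ∀ (j : ℕ) {x : ℝ}, x ∈ Set.Icc (-1:ℝ) 1 →
    |(U ℝ (j:ℤ)).eval x| ≤ (j:ℝ) + 1 := by
  intro j
  induction j with
  | zero => intro x hx; simp [U_zero]
  | succ j ih =>
    intro x hx
    have hU : U ℝ ((j:ℤ)+1) = X * U ℝ (j:ℤ) + T ℝ ((j:ℤ)+1) := U_eq_X_mul_U_add_T ℝ (j:ℤ)
    have hcast : ((j+1 : ℕ) : ℤ) = (j:ℤ) + 1 := by push_cast; ring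
    rw [hcast, hU]
    simp only [eval_add, eval_mul, eval_X]
    have h1 : |x * (U ℝ (j:ℤ)).eval x| ≤ (j:ℝ) + 1 := by
      rw [abs_mul]
      have hxa : |x| ≤ 1 := abs_le.mpr ⟨hx.1, hx.2⟩
      calc |x| * |(U ℝ (j:ℤ)).eval x| ≤ 1 * ((j:ℝ)+1) :=
        mul_le_mul hxa (ih hx) (abs_nonneg _) zero_le_one
      _ = (j:ℝ) + 1 := by ring
    have h2 : |(T ℝ ((j:ℤ)+1)).eval x| ≤ 1 := T_bound (d := 0) ((j:ℤ)+1) hx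
    calc |x * (U ℝ (j:ℤ)).eval x + (T ℝ ((j:ℤ)+1)).eval x|
        ≤ |x * (U ℝ (j:ℤ)).eval x| + |(T ℝ ((j:ℤ)+1)).eval x| := abs_add_le _ _
      _ ≤ ((j:ℝ) + 1) + 1 := add_le_add h1 h2
      _ = ((j+1:ℕ):ℝ) + 1 := by push_cast; ring

lemma uu_bound {d : ℕ} (hd : 3 ≤ d) (j : ℕ) {l : ℝ} (hl : |l| ≤ 2 * sD d) :
    |uu (d:ℝ) j l| ≤ ((j:ℝ) + 1) * sD d ^ j := by
  have hs := sD_pos hd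
  set x := l / (2 * sD d) with hx
  have hl' : l = 2 * sD d * x := by rw [hx]; field_simp
  have hxI : x ∈ Set.Icc (-1:ℝ) 1 := by
    constructor
    · rw [hx, le_div_iff₀ (by linarith)]
      have := neg_abs_le l
      linarith
    · rw [hx, div_le_iff₀ (by linarith)]
      have := le_abs_self l
      linarith
  rw [hl', uu_cheb hd j x, abs_mul, abs_pow, abs_of_pos hs]
  calc sD d ^ j * |(U ℝ (j:ℤ)).eval x| ≤ sD d ^ j * ((j:ℝ)+1) :=
    mul_le_mul_of_nonneg_left (U_bound j hxI) (by positivity)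
  _ = ((j:ℝ)+1) * sD d ^ j := by ring

lemma qq_bound {d : ℕ} (hd : 3 ≤ d) (j : ℕ) {l : ℝ} (hl : |l| ≤ 2 * sD d) :
    |qq (d:ℝ) j l| ≤ 2 * ((j:ℝ) + 1) * sD d ^ j := by
  have h1 : (1:ℝ) ≤ sD d := sD_one_le hd
  match j with
  | 0 =>
    have : qq (d:ℝ) 0 l = 1 := rfl
    rw [this]; norm_num
  | 1 =>
    have : qq (d:ℝ) 1 l = l := rfl
    rw [this]
    calc |l| ≤ 2 * sD d := hl
    _ ≤ 2 * ((1:ℝ)+1) * sD d ^ 1 := by nlinarith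
    _ = 2 * (((1:ℕ):ℝ)+1) * sD d ^ 1 := by norm_num
  | (j+2) =>
    rw [qq_eq_uu]
    have hp : sD d ^ j ≤ sD d ^ (j+2) := pow_le_pow_right₀ (by linarith) (by omega)
    calc |uu (d:ℝ) (j+2) l - uu (d:ℝ) j l| ≤ |uu (d:ℝ) (j+2) l| + |uu (d:ℝ) j l| := abs_sub _ _
      _ ≤ ((j:ℝ)+2+1) * sD d ^ (j+2) + ((j:ℝ)+1) * sD d ^ j := by
          have b1 := uu_bound hd (j+2) hl
          have b2 := uu_bound hd j hl
          push_cast at b1 ⊢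
          linarith
      _ ≤ ((j:ℝ)+3) * sD d ^ (j+2) + ((j:ℝ)+1) * sD d ^ (j+2) := by
          nlinarith [pow_nonneg (sD_pos hd).le j, pow_nonneg (sD_pos hd).le (j+2)]
      _ ≤ 2 * (((j:ℕ)+2:ℝ) + 1) * sD d ^ (j+2) := by
          push_cast
          nlinarith [pow_nonneg (sD_pos hd).le (j+2)]
      _ = 2 * (((j+2:ℕ):ℝ) + 1) * sD d ^ (j+2) := by push_cast; ring

lemma uu_cont (D : ℝ) : ∀ j, Continuous (fun l => uu D j l) := by
  intro j
  induction j using Nat.strong_induction_on with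
  | _ j ih =>
    match j with
    | 0 => exact continuous_const
    | 1 => exact continuous_id
    | (j+2) =>
      have h1 := ih (j+1) (by omega)
      have h2 := ih j (by omega)
      have : (fun l => uu D (j+2) l) = fun l => l * uu D (j+1) l - (D-1) * uu D j l := rfl
      rw [this]
      exact (continuous_id.mul h1).sub (continuous_const.mul h2)

lemma qq_cont (D : ℝ) : ∀ j, Continuous (fun l => qq D j l) := fun j =>
  match j with
  | 0 => continuous_const
  | 1 => continuous_id
  | (j+2) => by
    have : (fun l => qq D (j+2) l) = fun l => uu D (j+2) l - uu D j l := by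
      funext l; exact qq_eq_uu D j l
    rw [this]
    exact (uu_cont D (j+2)).sub (uu_cont D j)

/-- `∫ cos (n θ)` over `[0, π]`. -/
lemma intCos (n : ℕ) : ∫ θ in (0:ℝ)..π, Real.cos ((n:ℝ) * θ) = if n = 0 then π else 0 := by
  by_cases hn : n = 0
  · subst hn; simp
  · rw [if_neg hn]
    have hc : ((n:ℝ)) ≠ 0 := Nat.cast_ne_zero.mpr hn
    rw [intervalIntegral.integral_comp_mul_left Real.cos hc]
    simp [Real.sin_nat_mul_pi]

lemma intSinSin (j : ℕ) :
    ∫ θ in (0:ℝ)..π, Real.sin (((j:ℝ)+1) * θ) * Real.sin θ = if j = 0 then π/2 else 0 := by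
  have key : ∀ θ : ℝ, Real.sin (((j:ℝ)+1) * θ) * Real.sin θ
      = (Real.cos ((j:ℝ)*θ) - Real.cos (((j:ℝ)+2)*θ))/2 := by
    intro θ
    have h := Real.cos_sub_cos ((j:ℝ)*θ) (((j:ℝ)+2)*θ)
    have e1 : ((j:ℝ)*θ + ((j:ℝ)+2)*θ)/2 = ((j:ℝ)+1)*θ := by ring
    have e2 : ((j:ℝ)*θ - ((j:ℝ)+2)*θ)/2 = -θ := by ring
    rw [e1, e2, Real.sin_neg] at h
    linarith
  simp only [key]
  have i1 : IntervalIntegrable (fun θ => Real.cos ((j:ℝ)*θ)) volume 0 π :=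
    (Real.continuous_cos.comp (continuous_const.mul continuous_id)).intervalIntegrable _ _
  have i2 : IntervalIntegrable (fun θ => Real.cos (((j:ℝ)+2)*θ)) volume 0 π :=
    (Real.continuous_cos.comp (continuous_const.mul continuous_id)).intervalIntegrable _ _
  rw [intervalIntegral.integral_div, intervalIntegral.integral_sub i1 i2]
  have c1 := intCos j
  have c2 := intCos (j+2)
  rw [if_neg (by omega : ¬ j + 2 = 0)] at c2
  push_cast at c2
  rw [c1, c2]
  by_cases hj : j = 0 <;> simp [hj]

/-- Chebyshev orthogonality against the semicircle weight. -/
lemma intUsc (j : ℕ) :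
    ∫ x in (-1:ℝ)..1, (U ℝ (j:ℤ)).eval x * Real.sqrt (1 - x^2)
      = if j = 0 then π/2 else 0 := by
  have hg : Continuous (fun x : ℝ => (U ℝ (j:ℤ)).eval x * Real.sqrt (1 - x^2)) := by
    apply Continuous.mul
    · exact Polynomial.continuous_eval₂ _ _
    · exact Real.continuous_sqrt.comp (continuous_const.sub (continuous_pow 2))
  have h : ∀ x ∈ Set.uIcc (0:ℝ) π, HasDerivAt Real.cos (-Real.sin x) x :=
    fun x _ => Real.hasDerivAt_cos x
  have h' : ContinuousOn (fun x => -Real.sin x) (Set.uIcc (0:ℝ) π) :=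
    (Real.continuous_sin.neg).continuousOn
  have sub := intervalIntegral.integral_comp_smul_deriv h h' hg
  rw [Real.cos_zero, Real.cos_pi] at sub
  have flip : (∫ x in (1:ℝ)..(-1), (U ℝ (j:ℤ)).eval x * Real.sqrt (1 - x^2))
      = - ∫ x in (-1:ℝ)..1, (U ℝ (j:ℤ)).eval x * Real.sqrt (1 - x^2) :=
    intervalIntegral.integral_symm _ _
  rw [flip] at sub
  have lhs_eq : (∫ θ in (0:ℝ)..π, (-Real.sin θ) • ((fun x => (U ℝ (j:ℤ)).eval x * Real.sqrt (1 - x^2)) ∘ Real.cos) θ)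
      = - ∫ θ in (0:ℝ)..π, Real.sin (((j:ℝ)+1) * θ) * Real.sin θ := by
    rw [← intervalIntegral.integral_neg]
    apply intervalIntegral.integral_congr
    intro θ hθ
    rw [Set.uIcc_of_le Real.pi_pos.le] at hθ
    obtain ⟨h0, hπ⟩ := hθ
    have hsin : 0 ≤ Real.sin θ := Real.sin_nonneg_of_nonneg_of_le_pi h0 hπ
    have hsq : Real.sqrt (1 - Real.cos θ^2) = Real.sin θ := by
      rw [show 1 - Real.cos θ^2 = Real.sin θ^2 by rw [Real.sin_sq]]
      exact Real.sqrt_sq hsin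
    have hU := U_real_cos θ (j:ℤ)
    push_cast at hU
    simp only [smul_eq_mul, Function.comp_apply]
    rw [hsq]
    linear_combination (-Real.sin θ) * hU
  rw [lhs_eq] at sub
  have := intSinSin j
  rw [this] at sub
  linarith [sub]


end
section


lemma kmDensity_nonneg (d : ℕ) (l : ℝ) : 0 ≤ kmDensity d l := by
  unfold kmDensity
  split_ifs with h
  · have hd2 : l^2 < (d:ℝ)^2 := by nlinarith [sq_nonneg ((d:ℝ) - 2)]
    have hnum : 0 ≤ ((d : ℝ) / (2 * Real.pi)) * Real.sqrt (4 * ((d : ℝ) - 1) - l ^ 2) := by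
      apply mul_nonneg
      · positivity
      · exact Real.sqrt_nonneg _
    exact div_nonneg hnum (by linarith)
  · exact le_refl 0

lemma kmDensity_measurable (d : ℕ) : Measurable (kmDensity d) := by
  unfold kmDensity
  apply Measurable.ite
  · exact measurableSet_lt (by measurability) measurable_const
  · apply Measurable.div
    · exact (measurable_const.mul (Real.continuous_sqrt.measurable.comp (by measurability)))
    · measurability
  · exact measurable_const

lemma kmDensity_zero (d : ℕ) {l : ℝ} (h : 4*((d:ℝ)-1) ≤ l^2) : kmDensity d l = 0 :=
  if_neg (not_lt.mpr h)

lemma kmIntegral (d : ℕ) (g : ℝ → ℝ) :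
    ∫ l, g l ∂(kmMeasure d) = ∫ l, kmDensity d l * g l := by
  have : kmMeasure d = volume.withDensity (fun l => (((kmDensity d l).toNNReal : NNReal) : ENNReal)) := rfl
  rw [this, integral_withDensity_eq_integral_smul ((kmDensity_measurable d).real_toNNReal)]
  congr 1
  funext l
  rw [NNReal.smul_def, Real.coe_toNNReal _ (kmDensity_nonneg d l), smul_eq_mul]

lemma rD_sq {d : ℕ} (hd : 3 ≤ d) : (2 * sD d)^2 = 4*((d:ℝ)-1) := by
  have := sD_sq hd; nlinarith [this]

/-- Functions vanishing outside `[-r, r]` integrate as interval integrals: version for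
an explicit `sqrt` factor. -/
lemma integral_sqrt_support {d : ℕ} (hd : 3 ≤ d) (g : ℝ → ℝ) :
    ∫ l, g l * Real.sqrt (4*((d:ℝ)-1) - l^2)
      = ∫ l in (-(2 * sD d))..(2 * sD d), g l * Real.sqrt (4*((d:ℝ)-1) - l^2) := by
  set r := 2 * sD d with hr
  have hr0 : 0 < r := by have := sD_pos hd; positivity
  have hrsq : r^2 = 4*((d:ℝ)-1) := rD_sq hd
  have ind : (fun l => g l * Real.sqrt (4*((d:ℝ)-1) - l^2))
      = Set.indicator (Set.Ioc (-r) r) (fun l => g l * Real.sqrt (4*((d:ℝ)-1) - l^2)) := by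
    funext l
    by_cases hl : l ∈ Set.Ioc (-r) r
    · rw [Set.indicator_of_mem hl]
    · rw [Set.indicator_of_notMem hl]
      have : 4*((d:ℝ)-1) - l^2 ≤ 0 := by
        simp only [Set.mem_Ioc, not_and_or, not_lt, not_le] at hl
        rcases hl with h | h
        · nlinarith
        · nlinarith
      rw [Real.sqrt_eq_zero'.mpr this, mul_zero]
  conv_lhs => rw [ind]
  rw [MeasureTheory.integral_indicator measurableSet_Ioc,
    ← intervalIntegral.integral_of_le (by linarith : -r ≤ r)]

lemma key_density {d : ℕ} (hd : 3 ≤ d) (l : ℝ) :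
    kmDensity d l * ((d:ℝ)^2 - l^2) = ((d:ℝ)/(2*Real.pi)) * Real.sqrt (4*((d:ℝ)-1) - l^2) := by
  unfold kmDensity
  split_ifs with h
  · have hD := hD3 hd
    have hpos : (0:ℝ) < (d:ℝ)^2 - l^2 := by nlinarith [sq_nonneg ((d:ℝ) - 2)]
    field_simp
  · rw [Real.sqrt_eq_zero'.mpr (by linarith : 4*((d:ℝ)-1) - l^2 ≤ 0), zero_mul, mul_zero]

/-- The uniform bound on the density. -/
def C0 (d : ℕ) : ℝ := ((d:ℝ)/(2*Real.pi)) * Real.sqrt (4*((d:ℝ)-1)) / (((d:ℝ)-2)^2)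

lemma C0_nonneg (d : ℕ) : 0 ≤ C0 d := by
  unfold C0
  have : (0:ℝ) ≤ ((d:ℝ)/(2*Real.pi)) * Real.sqrt (4*((d:ℝ)-1)) := by positivity
  positivity

lemma kmDensity_le {d : ℕ} (hd : 3 ≤ d) (l : ℝ) : kmDensity d l ≤ C0 d := by
  have hD := hD3 hd
  unfold kmDensity C0
  split_ifs with h
  · apply div_le_div₀ (by positivity)
    · apply mul_le_mul_of_nonneg_left _ (by positivity)
      exact Real.sqrt_le_sqrt (by nlinarith [sq_nonneg l])
    · nlinarith
    · nlinarith
  · have : (0:ℝ) ≤ ((d:ℝ)/(2*Real.pi)) * Real.sqrt (4*((d:ℝ)-1)) := by positivity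
    positivity

lemma integrable_km {d : ℕ} (hd : 3 ≤ d) {g : ℝ → ℝ} (hg : Continuous g) :
    Integrable g (kmMeasure d) := by
  have hD := hD3 hd
  set r := 2 * sD d with hr
  have hr0 : 0 < r := by have := sD_pos hd; positivity
  have hrsq : r^2 = 4*((d:ℝ)-1) := rD_sq hd
  have : kmMeasure d = volume.withDensity (fun l => ENNReal.ofReal (kmDensity d l)) := rfl
  rw [this, integrable_withDensity_iff (by
      exact ENNReal.measurable_ofReal.comp (kmDensity_measurable d))
    (ae_of_all _ fun x => ENNReal.ofReal_lt_top)]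
  have heq : (fun x => g x * (ENNReal.ofReal (kmDensity d x)).toReal)
      = fun x => g x * kmDensity d x := by
    funext x
    rw [ENNReal.toReal_ofReal (kmDensity_nonneg d x)]
  rw [heq]
  have ind : (fun x => g x * kmDensity d x)
      = Set.indicator (Set.Icc (-r) r) (fun x => g x * kmDensity d x) := by
    funext l
    by_cases hl : l ∈ Set.Icc (-r) r
    · rw [Set.indicator_of_mem hl]
    · rw [Set.indicator_of_notMem hl]
      have : 4*((d:ℝ)-1) ≤ l^2 := by
        simp only [Set.mem_Icc, not_and_or, not_le] at hl
        rcases hl with h | h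
        · nlinarith
        · nlinarith
      rw [kmDensity_zero d this, mul_zero]
  rw [ind, integrable_indicator_iff measurableSet_Icc]
  obtain ⟨C, hC⟩ := isCompact_Icc.exists_bound_of_continuousOn
    (hg.continuousOn : ContinuousOn g (Set.Icc (-r) r))
  apply MeasureTheory.Measure.integrableOn_of_bounded (M := C * C0 d)
  · exact measure_Icc_lt_top.ne
  · exact (hg.measurable.mul (kmDensity_measurable d)).aestronglyMeasurable
  · rw [ae_restrict_iff' measurableSet_Icc]
    apply ae_of_all
    intro x hx
    have h1 : ‖g x‖ ≤ C := hC x hx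
    have h2 : 0 ≤ kmDensity d x := kmDensity_nonneg d x
    rw [norm_mul]
    calc ‖g x‖ * ‖kmDensity d x‖ ≤ C * ‖kmDensity d x‖ :=
        mul_le_mul_of_nonneg_right h1 (norm_nonneg _)
      _ ≤ C * C0 d := by
        rw [Real.norm_eq_abs, abs_of_nonneg h2]
        exact mul_le_mul_of_nonneg_left (kmDensity_le hd x)
          (le_trans (norm_nonneg _) h1)

/-- Chebyshev semicircle integral values. -/
lemma intU {d : ℕ} (hd : 3 ≤ d) (j : ℕ) :
    ∫ l in (-(2 * sD d))..(2 * sD d), uu (d:ℝ) j l * Real.sqrt (4*((d:ℝ)-1) - l^2)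
      = if j = 0 then 2*Real.pi*((d:ℝ)-1) else 0 := by
  set c := 2 * sD d with hc
  have hc0 : 0 < c := by have := sD_pos hd; positivity
  have hcne : c ≠ 0 := ne_of_gt hc0
  have hcsq : c^2 = 4*((d:ℝ)-1) := rD_sq hd
  set F := fun l => uu (d:ℝ) j l * Real.sqrt (4*((d:ℝ)-1) - l^2) with hF
  have sub := intervalIntegral.integral_comp_mul_left F hcne (a := (-1:ℝ)) (b := (1:ℝ))
  -- sub : ∫ x in -1..1, F (c * x) = c⁻¹ • ∫ x in c * -1..c * 1, F x
  have hb1 : c * (-1:ℝ) = -c := by ring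
  have hb2 : c * (1:ℝ) = c := by ring
  rw [hb1, hb2] at sub
  have main : ∫ x in (-c)..c, F x = c • ∫ x in (-1:ℝ)..1, F (c * x) := by
    rw [sub, smul_smul, mul_inv_cancel₀ hcne, one_smul]
  rw [main]
  have point : Set.EqOn (fun x => F (c * x))
      (fun x => (c * sD d ^ j) * ((U ℝ (j:ℤ)).eval x * Real.sqrt (1 - x^2)))
      (Set.uIcc (-1:ℝ) 1) := by
    intro x _
    simp only [hF]
    have e1 : uu (d:ℝ) j (c * x) = sD d ^ j * (U ℝ (j:ℤ)).eval x := by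
      rw [hc]
      exact uu_cheb hd j x
    have e2 : Real.sqrt (4*((d:ℝ)-1) - (c*x)^2) = c * Real.sqrt (1 - x^2) := by
      have : 4*((d:ℝ)-1) - (c*x)^2 = c^2 * (1 - x^2) := by linear_combination (-1 : ℝ) * hcsq
      rw [this, Real.sqrt_mul (sq_nonneg c), Real.sqrt_sq hc0.le]
    rw [e1, e2]
    ring
  rw [intervalIntegral.integral_congr point, intervalIntegral.integral_const_mul, intUsc j]
  by_cases hj : j = 0
  · subst hj
    rw [if_pos rfl, if_pos rfl]
    have hs := sD_sq hd
    rw [hc, smul_eq_mul]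
    linear_combination (2*Real.pi) * hs
  · rw [if_neg hj, if_neg hj]
    simp

lemma intQ {d : ℕ} (hd : 3 ≤ d) (j : ℕ) :
    ∫ l in (-(2 * sD d))..(2 * sD d), qq (d:ℝ) j l * Real.sqrt (4*((d:ℝ)-1) - l^2)
      = if j = 0 then 2*Real.pi*((d:ℝ)-1) else if j = 2 then -(2*Real.pi*((d:ℝ)-1)) else 0 := by
  match j with
  | 0 =>
    have : ∀ l : ℝ, qq (d:ℝ) 0 l = uu (d:ℝ) 0 l := fun l => rfl
    simp only [this]
    rw [intU hd 0]; rfl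
  | 1 =>
    have : ∀ l : ℝ, qq (d:ℝ) 1 l = uu (d:ℝ) 1 l := fun l => rfl
    simp only [this]
    rw [intU hd 1]; rfl
  | (j+2) =>
    have hpt : ∀ l : ℝ, qq (d:ℝ) (j+2) l * Real.sqrt (4*((d:ℝ)-1) - l^2)
        = uu (d:ℝ) (j+2) l * Real.sqrt (4*((d:ℝ)-1) - l^2)
          - uu (d:ℝ) j l * Real.sqrt (4*((d:ℝ)-1) - l^2) := by
      intro l; rw [qq_eq_uu]; ring
    simp only [hpt]
    have hint : ∀ i : ℕ, IntervalIntegrable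
        (fun l => uu (d:ℝ) i l * Real.sqrt (4*((d:ℝ)-1) - l^2)) volume
        (-(2 * sD d)) (2 * sD d) := by
      intro i
      apply Continuous.intervalIntegrable
      exact (uu_cont _ i).mul
        (Real.continuous_sqrt.comp (continuous_const.sub (continuous_pow 2)))
    rw [intervalIntegral.integral_sub (hint (j+2)) (hint j), intU hd (j+2), intU hd j]
    by_cases hj : j = 0
    · subst hj; norm_num
    · rw [if_neg (by omega : ¬ j + 2 = 0), if_neg hj, if_neg (by omega : ¬ j + 2 = 0),
        if_neg (by omega : ¬ j + 2 = 2)]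
      simp

/-- The integrals of the orthogonal polynomials. -/
def II (d : ℕ) (j : ℕ) : ℝ := ∫ l, qq (d:ℝ) j l ∂(kmMeasure d)

lemma II_relation {d : ℕ} (hd : 3 ≤ d) (j : ℕ) :
    ∫ l, qq (d:ℝ) j l * ((d:ℝ)^2 - l^2) ∂(kmMeasure d)
      = if j = 0 then (d:ℝ)*((d:ℝ)-1) else if j = 2 then -((d:ℝ)*((d:ℝ)-1)) else 0 := by
  rw [kmIntegral]
  have point : ∀ l : ℝ, kmDensity d l * (qq (d:ℝ) j l * ((d:ℝ)^2 - l^2))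
      = ((d:ℝ)/(2*Real.pi)) * (qq (d:ℝ) j l * Real.sqrt (4*((d:ℝ)-1) - l^2)) := by
    intro l
    have := key_density hd l
    linear_combination (qq (d:ℝ) j l) * this
  simp only [point]
  rw [MeasureTheory.integral_const_mul]
  have : ∫ l, qq (d:ℝ) j l * Real.sqrt (4*((d:ℝ)-1) - l^2)
      = ∫ l in (-(2 * sD d))..(2 * sD d), qq (d:ℝ) j l * Real.sqrt (4*((d:ℝ)-1) - l^2) :=
    integral_sqrt_support hd _
  rw [this, intQ hd j]
  have hπ : Real.pi ≠ 0 := Real.pi_ne_zero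
  by_cases h0 : j = 0
  · subst h0; norm_num; field_simp
  · by_cases h2 : j = 2
    · subst h2; norm_num; field_simp
    · rw [if_neg h0, if_neg h2, if_neg h0, if_neg h2, mul_zero]

section Relations

variable {d : ℕ}

lemma II_int (hd : 3 ≤ d) (j : ℕ) : Integrable (fun l => qq (d:ℝ) j l) (kmMeasure d) :=
  integrable_km hd (qq_cont _ j)

lemma relA (hd : 3 ≤ d) : II d 2 = (d:ℝ)*((d:ℝ)-1) * (II d 0 - 1) := by
  have h := II_relation hd 0
  norm_num at h
  have pid : (fun l : ℝ => qq (d:ℝ) 0 l * ((d:ℝ)^2 - l^2))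
      = fun l => ((d:ℝ)^2-(d:ℝ)) * qq (d:ℝ) 0 l - qq (d:ℝ) 2 l := by
    funext l
    have e0 : qq (d:ℝ) 0 l = 1 := rfl
    have e2 : qq (d:ℝ) 2 l = l^2 - (d:ℝ) := rfl
    rw [e0, e2]; ring
  rw [pid, MeasureTheory.integral_sub ((II_int hd 0).const_mul _) (II_int hd 2),
    MeasureTheory.integral_const_mul] at h
  unfold II
  linear_combination -h

lemma relB (hd : 3 ≤ d) : II d 3 = ((d:ℝ)-1)^2 * II d 1 := by
  have h := II_relation hd 1
  norm_num at h
  have pid : (fun l : ℝ => qq (d:ℝ) 1 l * ((d:ℝ)^2 - l^2))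
      = fun l => ((d:ℝ)-1)^2 * qq (d:ℝ) 1 l - qq (d:ℝ) 3 l := by
    funext l
    have e1 : qq (d:ℝ) 1 l = l := rfl
    have e3 : qq (d:ℝ) 3 l = l * (l^2 - (d:ℝ)) - ((d:ℝ)-1) * l := rfl
    rw [e1, e3]; ring
  rw [pid, MeasureTheory.integral_sub ((II_int hd 1).const_mul _) (II_int hd 3),
    MeasureTheory.integral_const_mul] at h
  unfold II
  linear_combination -h

lemma relC (hd : 3 ≤ d) : II d 4 = (d:ℝ)*((d:ℝ)-1)^3 * (II d 0 - 1) := by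
  have h := II_relation hd 2
  norm_num at h
  have pid : (fun l : ℝ => qq (d:ℝ) 2 l * ((d:ℝ)^2 - l^2))
      = fun l => (((d:ℝ)^2-2*((d:ℝ)-1)) * qq (d:ℝ) 2 l - qq (d:ℝ) 4 l)
        - ((d:ℝ)*((d:ℝ)-1)) * qq (d:ℝ) 0 l := by
    funext l
    have e0 : qq (d:ℝ) 0 l = 1 := rfl
    have e2 : qq (d:ℝ) 2 l = l^2 - (d:ℝ) := rfl
    have e3 : qq (d:ℝ) 3 l = l * (l^2 - (d:ℝ)) - ((d:ℝ)-1) * l := rfl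
    have e4 : qq (d:ℝ) 4 l = l * qq (d:ℝ) 3 l - ((d:ℝ)-1) * qq (d:ℝ) 2 l := rfl
    rw [e4, e3, e2, e0]; ring
  rw [pid, MeasureTheory.integral_sub (by
      exact ((II_int hd 2).const_mul _).sub (II_int hd 4) :
      Integrable (fun l => ((d:ℝ)^2-2*((d:ℝ)-1)) * qq (d:ℝ) 2 l - qq (d:ℝ) 4 l) (kmMeasure d))
    ((II_int hd 0).const_mul _), MeasureTheory.integral_sub ((II_int hd 2).const_mul _) (II_int hd 4),
    MeasureTheory.integral_const_mul, MeasureTheory.integral_const_mul] at h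
  have hA := relA hd
  unfold II at hA ⊢
  linear_combination -h + ((d:ℝ)^2-2*((d:ℝ)-1)) * hA

lemma relD (hd : 3 ≤ d) (j : ℕ) :
    II d (j+5) = ((d:ℝ)^2 - 2*((d:ℝ)-1)) * II d (j+3) - ((d:ℝ)-1)^2 * II d (j+1) := by
  have h := II_relation hd (j+3)
  rw [if_neg (by omega : ¬ j+3 = 0), if_neg (by omega : ¬ j+3 = 2)] at h
  have pid : (fun l : ℝ => qq (d:ℝ) (j+3) l * ((d:ℝ)^2 - l^2))
      = fun l => (((d:ℝ)^2-2*((d:ℝ)-1)) * qq (d:ℝ) (j+3) l - qq (d:ℝ) (j+5) l)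
        - ((d:ℝ)-1)^2 * qq (d:ℝ) (j+1) l := by
    funext l
    have e3 : qq (d:ℝ) (j+3) l = l * qq (d:ℝ) (j+2) l - ((d:ℝ)-1) * qq (d:ℝ) (j+1) l := rfl
    have e4 : qq (d:ℝ) (j+4) l = l * qq (d:ℝ) (j+3) l - ((d:ℝ)-1) * qq (d:ℝ) (j+2) l := rfl
    have e5 : qq (d:ℝ) (j+5) l = l * qq (d:ℝ) (j+4) l - ((d:ℝ)-1) * qq (d:ℝ) (j+3) l := rfl
    rw [e5, e4, e3]; ring
  rw [pid, MeasureTheory.integral_sub (by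
      exact ((II_int hd (j+3)).const_mul _).sub (II_int hd (j+5)) :
      Integrable (fun l => ((d:ℝ)^2-2*((d:ℝ)-1)) * qq (d:ℝ) (j+3) l - qq (d:ℝ) (j+5) l) (kmMeasure d))
    ((II_int hd (j+1)).const_mul _),
    MeasureTheory.integral_sub ((II_int hd (j+3)).const_mul _) (II_int hd (j+5)),
    MeasureTheory.integral_const_mul, MeasureTheory.integral_const_mul] at h
  unfold II
  linear_combination -h

lemma II_even (hd : 3 ≤ d) : ∀ jj : ℕ,
    II d (2*jj+2) = (d:ℝ)*((d:ℝ)-1)^(2*jj+1) * (II d 0 - 1) := by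
  intro jj
  induction jj using Nat.strong_induction_on with
  | _ jj ih =>
    match jj with
    | 0 =>
      have := relA hd
      rw [show 2*0+2 = 2 by omega, show 2*0+1 = 1 by omega]
      rw [this]; ring
    | 1 =>
      have := relC hd
      rw [show 2*1+2 = 4 by omega, show 2*1+1 = 3 by omega]
      rw [this]
    | (jj+2) =>
      have h1 := ih (jj+1) (by omega)
      have h2 := ih jj (by omega)
      have hD := relD hd (2*jj+1)
      rw [show 2*jj+1+5 = 2*(jj+2)+2 by omega, show 2*jj+1+3 = 2*(jj+1)+2 by omega,
        show 2*jj+1+1 = 2*jj+2 by omega] at hD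
      rw [hD, h1, h2]
      ring

lemma II_odd (hd : 3 ≤ d) : ∀ jj : ℕ,
    II d (2*jj+3) = ((d:ℝ)-1)^(2*jj+2) * II d 1 := by
  intro jj
  induction jj using Nat.strong_induction_on with
  | _ jj ih =>
    match jj with
    | 0 =>
      have := relB hd
      rw [show 2*0+3 = 3 by omega, show 2*0+2 = 2 by omega]
      rw [this]
    | 1 =>
      have h0 := relB hd
      have hD := relD hd 0
      rw [show 0+5 = 5 by omega, show 0+3 = 3 by omega, show 0+1 = 1 by omega] at hD
      rw [show 2*1+3 = 5 by omega, show 2*1+2 = 4 by omega]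
      rw [hD, h0]
      ring
    | (jj+2) =>
      have h1 := ih (jj+1) (by omega)
      have h2 := ih jj (by omega)
      have hD := relD hd (2*jj+2)
      rw [show 2*jj+2+5 = 2*(jj+2)+3 by omega, show 2*jj+2+3 = 2*(jj+1)+3 by omega,
        show 2*jj+2+1 = 2*jj+3 by omega] at hD
      rw [hD, h1, h2]
      ring

/-- Reduction of `km`-integrals to interval integrals. -/
lemma integral_density_support (hd : 3 ≤ d) (g : ℝ → ℝ) :
    ∫ l, kmDensity d l * g l
      = ∫ l in (-(2 * sD d))..(2 * sD d), kmDensity d l * g l := by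
  set r := 2 * sD d with hr
  have hr0 : 0 < r := by have := sD_pos hd; positivity
  have hrsq : r^2 = 4*((d:ℝ)-1) := rD_sq hd
  have ind : (fun l => kmDensity d l * g l)
      = Set.indicator (Set.Ioc (-r) r) (fun l => kmDensity d l * g l) := by
    funext l
    by_cases hl : l ∈ Set.Ioc (-r) r
    · rw [Set.indicator_of_mem hl]
    · rw [Set.indicator_of_notMem hl]
      have : 4*((d:ℝ)-1) ≤ l^2 := by
        simp only [Set.mem_Ioc, not_and_or, not_lt, not_le] at hl
        rcases hl with h | h
        · nlinarith
        · nlinarith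
      rw [kmDensity_zero d this, zero_mul]
  conv_lhs => rw [ind]
  rw [MeasureTheory.integral_indicator measurableSet_Ioc,
    ← intervalIntegral.integral_of_le (by linarith : -r ≤ r)]

lemma II_bound (hd : 3 ≤ d) (j : ℕ) :
    |II d j| ≤ C0 d * (2*((j:ℝ)+1) * sD d ^ j) * (4 * sD d) := by
  have hs0 : 0 < sD d := sD_pos hd
  have hs1 : 1 ≤ sD d := sD_one_le hd
  unfold II
  rw [kmIntegral, integral_density_support hd]
  have bound : ∀ x ∈ Set.uIoc (-(2 * sD d)) (2 * sD d),
      ‖kmDensity d x * qq (d:ℝ) j x‖ ≤ C0 d * (2*((j:ℝ)+1) * sD d ^ j) := by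
    intro x hx
    rw [Set.uIoc_of_le (by linarith : -(2 * sD d) ≤ 2 * sD d)] at hx
    have hxabs : |x| ≤ 2 * sD d := abs_le.mpr ⟨hx.1.le, hx.2⟩
    rw [Real.norm_eq_abs, abs_mul, abs_of_nonneg (kmDensity_nonneg d x)]
    have b1 : kmDensity d x ≤ C0 d := kmDensity_le hd x
    have b2 : |qq (d:ℝ) j x| ≤ 2*((j:ℝ)+1) * sD d ^ j := qq_bound hd j hxabs
    exact mul_le_mul b1 b2 (abs_nonneg _) (C0_nonneg d)
  have := intervalIntegral.norm_integral_le_of_norm_le_const bound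
  rw [Real.norm_eq_abs] at this
  calc |∫ l in (-(2 * sD d))..(2 * sD d), kmDensity d l * qq (d:ℝ) j l|
      ≤ C0 d * (2*((j:ℝ)+1) * sD d ^ j) * |2 * sD d - -(2 * sD d)| := this
    _ = C0 d * (2*((j:ℝ)+1) * sD d ^ j) * (4 * sD d) := by
        rw [show (2 * sD d - -(2 * sD d)) = 4 * sD d by ring, abs_of_pos (by linarith)]

lemma geom_vanish (c K : ℝ) (hc : 0 ≤ c)
    (h : ∀ m : ℕ, c * 2^m ≤ K * ((m:ℝ)+1)) : c = 0 := by
  by_contra hne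
  have hcpos : 0 < c := lt_of_le_of_ne hc (Ne.symm hne)
  have hK : 0 < K := by
    have := h 0
    norm_num at this
    linarith
  have key : ∀ m : ℕ, c * 2^m ≤ 2*K := by
    intro m
    have h2m := h (2*m)
    have hpow : ((2*m:ℕ):ℝ) + 1 ≤ 2 * 2^m := by
      have : (2*m:ℕ) + 1 ≤ 2 * 2^m := by
        have := Nat.lt_two_pow_self (n := m)
        omega
      exact_mod_cast this
    have e : (2:ℝ)^(2*m) = 2^m * 2^m := by
      rw [two_mul, pow_add]
    rw [e] at h2m
    have : c * 2^m * 2^m ≤ K * (2 * 2^m) := by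
      calc c * 2^m * 2^m = c * (2^m * 2^m) := by ring
        _ ≤ K * (((2*m:ℕ):ℝ)+1) := h2m
        _ ≤ K * (2 * 2^m) := mul_le_mul_of_nonneg_left hpow hK.le
    have hp : (0:ℝ) < 2^m := by positivity
    nlinarith
  obtain ⟨m, hm⟩ := pow_unbounded_of_one_lt (2*K/c) (one_lt_two (α := ℝ))
  have := key m
  rw [div_lt_iff₀ hcpos] at hm
  nlinarith [key m]

lemma II_zero_one (hd : 3 ≤ d) : II d 0 = 1 := by
  have hs0 : 0 < sD d := sD_pos hd
  have hs1 : 1 ≤ sD d := sD_one_le hd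
  have hs2 : sD d ^ 2 = (d:ℝ) - 1 := sD_sq hd
  have hD : (3:ℝ) ≤ (d:ℝ) := hD3 hd
  have hC0 : 0 ≤ C0 d := C0_nonneg d
  have key : ∀ jj : ℕ, |II d 0 - 1| * 2^jj ≤ (64 * C0 d * sD d) * ((jj:ℝ)+1) := by
    intro jj
    have hval := II_even hd jj
    have hb := II_bound hd (2*jj+2)
    rw [hval] at hb
    rw [abs_mul, abs_mul, abs_of_nonneg (by linarith : (0:ℝ) ≤ (d:ℝ)),
      abs_of_nonneg (pow_nonneg (by linarith : (0:ℝ) ≤ (d:ℝ)-1) (2*jj+1))] at hb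
    push_cast at hb
    have hP : (0:ℝ) < sD d ^ (2*jj+2) := pow_pos hs0 _
    have h1 : (2:ℝ)^jj ≤ ((d:ℝ)-1)^jj := pow_le_pow_left₀ (by norm_num) (by linarith) jj
    have h2 : ((d:ℝ)-1)^(2*jj+1) = sD d ^ (2*jj+2) * ((d:ℝ)-1)^jj := by
      have e1 : ((d:ℝ)-1)^(2*jj+1) = ((d:ℝ)-1)^(jj+1) * ((d:ℝ)-1)^jj := by
        rw [← pow_add]; congr 1 <;> omega
      have e2 : ((d:ℝ)-1)^(jj+1) = sD d ^ (2*jj+2) := by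
        rw [← hs2, ← pow_mul]; congr 1 <;> omega
      rw [e1, e2]
    rw [h2] at hb
    have base : (3:ℝ) * 2^jj ≤ (d:ℝ) * ((d:ℝ)-1)^jj :=
      mul_le_mul (by linarith) h1 (by positivity) (by linarith)
    have low : 3 * 2^jj * (|II d 0 - 1| * sD d ^ (2*jj+2))
        ≤ (d:ℝ) * ((d:ℝ)-1)^jj * (|II d 0 - 1| * sD d ^ (2*jj+2)) :=
      mul_le_mul_of_nonneg_right base (by positivity)
    have hb' : (d:ℝ) * ((d:ℝ)-1)^jj * (|II d 0 - 1| * sD d ^ (2*jj+2))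
        ≤ (8 * C0 d * sD d * (2*(jj:ℝ)+3)) * sD d ^ (2*jj+2) := by
      calc (d:ℝ) * ((d:ℝ)-1)^jj * (|II d 0 - 1| * sD d ^ (2*jj+2))
          = (d:ℝ) * (sD d ^ (2*jj+2) * ((d:ℝ)-1)^jj) * |II d 0 - 1| := by ring
        _ ≤ C0 d * (2 * ((2*(jj:ℝ)+2) + 1) * sD d ^ (2*jj+2)) * (4 * sD d) := hb
        _ = (8 * C0 d * sD d * (2*(jj:ℝ)+3)) * sD d ^ (2*jj+2) := by ring
    have cancel : 3 * 2^jj * |II d 0 - 1| ≤ 8 * C0 d * sD d * (2*(jj:ℝ)+3) := by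
      have := le_trans low hb'
      have h3 : (3 * 2^jj * |II d 0 - 1|) * sD d ^ (2*jj+2)
          ≤ (8 * C0 d * sD d * (2*(jj:ℝ)+3)) * sD d ^ (2*jj+2) := by
        calc (3 * 2^jj * |II d 0 - 1|) * sD d ^ (2*jj+2)
            = 3 * 2^jj * (|II d 0 - 1| * sD d ^ (2*jj+2)) := by ring
          _ ≤ (8 * C0 d * sD d * (2*(jj:ℝ)+3)) * sD d ^ (2*jj+2) := le_trans low hb'
      exact le_of_mul_le_mul_right h3 hP
    have hcs : (0:ℝ) ≤ C0 d * sD d * (jj:ℝ) :=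
      mul_nonneg (mul_nonneg hC0 hs0.le) (Nat.cast_nonneg jj)
    nlinarith [cancel, hcs, pow_nonneg (by norm_num : (0:ℝ) ≤ 2) jj, abs_nonneg (II d 0 - 1)]
  have := geom_vanish _ _ (abs_nonneg (II d 0 - 1)) key
  have := abs_eq_zero.mp this
  linarith

lemma II_one_zero (hd : 3 ≤ d) : II d 1 = 0 := by
  have hs0 : 0 < sD d := sD_pos hd
  have hs1 : 1 ≤ sD d := sD_one_le hd
  have hs2 : sD d ^ 2 = (d:ℝ) - 1 := sD_sq hd
  have hD : (3:ℝ) ≤ (d:ℝ) := hD3 hd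
  have hC0 : 0 ≤ C0 d := C0_nonneg d
  have key : ∀ jj : ℕ, |II d 1| * 2^jj ≤ (64 * C0 d * sD d) * ((jj:ℝ)+1) := by
    intro jj
    have hval := II_odd hd jj
    have hb := II_bound hd (2*jj+3)
    rw [hval] at hb
    rw [abs_mul, abs_of_nonneg (pow_nonneg (by linarith : (0:ℝ) ≤ (d:ℝ)-1) (2*jj+2))] at hb
    push_cast at hb
    have hP : (0:ℝ) < sD d ^ (2*jj+3) := pow_pos hs0 _
    have h1 : (2:ℝ)^jj ≤ ((d:ℝ)-1)^jj := pow_le_pow_left₀ (by norm_num) (by linarith) jj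
    have h2 : ((d:ℝ)-1)^(2*jj+2) = sD d ^ (2*jj+3) * (sD d * ((d:ℝ)-1)^jj) := by
      have e0 : ((d:ℝ)-1)^(2*jj+2) = sD d ^ (2*(2*jj+2)) := by rw [← hs2, ← pow_mul]
      rw [e0, show 2*(2*jj+2) = (2*jj+3) + (1 + 2*jj) by omega, pow_add]
      congr 1
      rw [pow_add, pow_one, pow_mul, hs2]
    rw [h2] at hb
    have base : (1:ℝ) * 2^jj ≤ sD d * ((d:ℝ)-1)^jj :=
      mul_le_mul hs1 h1 (by positivity) (by linarith)
    have low : 1 * 2^jj * (|II d 1| * sD d ^ (2*jj+3))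
        ≤ sD d * ((d:ℝ)-1)^jj * (|II d 1| * sD d ^ (2*jj+3)) :=
      mul_le_mul_of_nonneg_right base (by positivity)
    have hb3 : sD d * ((d:ℝ)-1)^jj * (|II d 1| * sD d ^ (2*jj+3))
        ≤ (8 * C0 d * sD d * (2*(jj:ℝ)+4)) * sD d ^ (2*jj+3) := by
      calc sD d * ((d:ℝ)-1)^jj * (|II d 1| * sD d ^ (2*jj+3))
          = sD d ^ (2*jj+3) * (sD d * ((d:ℝ)-1)^jj) * |II d 1| := by ring
        _ ≤ C0 d * (2 * ((2*(jj:ℝ)+3) + 1) * sD d ^ (2*jj+3)) * (4 * sD d) := hb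
        _ = (8 * C0 d * sD d * (2*(jj:ℝ)+4)) * sD d ^ (2*jj+3) := by ring
    have cancel : 1 * 2^jj * |II d 1| ≤ 8 * C0 d * sD d * (2*(jj:ℝ)+4) := by
      have h3 : (1 * 2^jj * |II d 1|) * sD d ^ (2*jj+3)
          ≤ (8 * C0 d * sD d * (2*(jj:ℝ)+4)) * sD d ^ (2*jj+3) := by
        calc (1 * 2^jj * |II d 1|) * sD d ^ (2*jj+3)
            = 1 * 2^jj * (|II d 1| * sD d ^ (2*jj+3)) := by ring
          _ ≤ (8 * C0 d * sD d * (2*(jj:ℝ)+4)) * sD d ^ (2*jj+3) := le_trans low hb3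
      exact le_of_mul_le_mul_right h3 hP
    have hcs : (0:ℝ) ≤ C0 d * sD d * (jj:ℝ) :=
      mul_nonneg (mul_nonneg hC0 hs0.le) (Nat.cast_nonneg jj)
    nlinarith [cancel, hcs, pow_nonneg (by norm_num : (0:ℝ) ≤ 2) jj, abs_nonneg (II d 1)]
  have := geom_vanish _ _ (abs_nonneg (II d 1)) key
  exact abs_eq_zero.mp this

lemma II_vals (hd : 3 ≤ d) : ∀ j : ℕ, II d j = if j = 0 then 1 else 0 := by
  intro j
  match j with
  | 0 => rw [if_pos rfl]; exact II_zero_one hd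
  | 1 => rw [if_neg one_ne_zero]; exact II_one_zero hd
  | (j+2) =>
    rw [if_neg (by omega : ¬ j+2 = 0)]
    rcases Nat.even_or_odd j with ⟨m, hm⟩ | ⟨m, hm⟩
    · have := II_even hd m
      rw [show 2*m+2 = j+2 by omega] at this
      rw [this, II_zero_one hd]
      ring
    · have := II_odd hd m
      rw [show 2*m+3 = j+2 by omega] at this
      rw [this, II_one_zero hd]
      ring

/-- Moments of the Kesten–McKay measure. -/
lemma km_moment (hd : 3 ≤ d) (m : ℕ) :
    ∫ l, l^m ∂(kmMeasure d) = cc (d:ℝ) m 0 := by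
  have hpt : (fun l : ℝ => l^m)
      = fun l => ∑ j ∈ Finset.range (m+1), cc (d:ℝ) m j * qq (d:ℝ) j l :=
    funext (pow_eq_sum_cc_qq (d:ℝ) m)
  rw [hpt, MeasureTheory.integral_finset_sum _
    (fun j _ => (II_int hd j).const_mul (cc (d:ℝ) m j))]
  have : ∀ j ∈ Finset.range (m+1), ∫ l, cc (d:ℝ) m j * qq (d:ℝ) j l ∂(kmMeasure d)
      = cc (d:ℝ) m j * II d j := by
    intro j _
    rw [MeasureTheory.integral_const_mul]
    rfl
  rw [Finset.sum_congr rfl this]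
  rw [Finset.sum_congr rfl (fun j _ => by rw [II_vals hd j])]
  rw [Finset.sum_eq_single 0 (fun b _ hb => by rw [if_neg hb, mul_zero])
    (fun h => absurd (Finset.mem_range.mpr (by omega)) h)]
  rw [if_pos rfl, mul_one]

end Relations


end
section


variable {n d k : ℕ} {G : SimpleGraph (Fin n)} {x : Fin n}

/-- The sphere of radius `j` around `x`. -/
def sph (G : SimpleGraph (Fin n)) (x : Fin n) (j : ℕ) : Finset (Fin n) :=
  Finset.univ.filter (fun y => G.Reachable x y ∧ G.dist x y = j)

lemma mem_sph {j : ℕ} {y : Fin n} :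
    y ∈ sph G x j ↔ G.Reachable x y ∧ G.dist x y = j := by simp [sph]

/-- The indicator vector of the sphere of radius `j`. -/
def chi (G : SimpleGraph (Fin n)) (x : Fin n) (j : ℕ) : Fin n → ℝ :=
  fun y => if y ∈ sph G x j then 1 else 0

lemma sph_zero : sph G x 0 = {x} := by
  ext y
  rw [mem_sph, Finset.mem_singleton]
  constructor
  · rintro ⟨hr, hd⟩
    rcases dist_eq_zero_iff_eq_or_not_reachable.mp hd with h | h
    · exact h.symm
    · exact absurd hr h
  · rintro rfl
    exact ⟨Reachable.refl _, SimpleGraph.dist_self⟩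

lemma dist_le_succ_of_adj {w y : Fin n} (hr : G.Reachable x w) (h : G.Adj w y) :
    G.dist x y ≤ G.dist x w + 1 := by
  obtain ⟨p, hp⟩ := hr.exists_walk_length_eq_dist
  calc G.dist x y ≤ (p.concat h).length := SimpleGraph.dist_le _
    _ = G.dist x w + 1 := by rw [SimpleGraph.Walk.length_concat, hp]

lemma reach_of_adj {w y : Fin n} (hr : G.Reachable x w) (h : G.Adj w y) :
    G.Reachable x y := hr.trans ⟨SimpleGraph.Walk.cons h SimpleGraph.Walk.nil⟩

lemma exists_parent {u : Fin n} {j : ℕ} (hr : G.Reachable x u) (hd : G.dist x u = j+1) :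
    ∃ v, G.Adj u v ∧ G.Reachable x v ∧ G.dist x v = j := by
  obtain ⟨p, hp⟩ := hr.exists_walk_length_eq_dist
  have hne : u ≠ x := by
    intro h
    rw [h, SimpleGraph.dist_self] at hd
    omega
  obtain ⟨v, hadj, q, hq⟩ := (p.reverse).exists_eq_cons_of_ne hne
  have hlen : q.length = j := by
    have h1 : p.reverse.length = j + 1 := by rw [SimpleGraph.Walk.length_reverse, hp, hd]
    rw [hq, SimpleGraph.Walk.length_cons] at h1
    omega
  have hrv : G.Reachable x v := ⟨q.reverse⟩
  have hle : G.dist x v ≤ j := by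
    calc G.dist x v ≤ q.reverse.length := SimpleGraph.dist_le _
      _ = j := by rw [SimpleGraph.Walk.length_reverse, hlen]
  have hge : j ≤ G.dist x v := by
    have := dist_le_succ_of_adj hrv hadj.symm
    omega
  exact ⟨v, hadj, hrv, le_antisymm hle hge⟩

lemma exists_ball_path : ∀ j, j < k → ∀ u : Fin n, G.Reachable x u → G.dist x u = j →
    ∃ p : (ballGraph G x k).Walk u x, p.IsPath ∧ p.length = j ∧
      ∀ w ∈ p.support, G.Reachable x w ∧ (w = u ∨ G.dist x w < j) := by
  intro j
  induction j with
  | zero =>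
    intro _ u hr hd
    have : u = x := by
      rcases dist_eq_zero_iff_eq_or_not_reachable.mp hd with h | h
      · exact h.symm
      · exact absurd hr h
    subst this
    refine ⟨SimpleGraph.Walk.nil, SimpleGraph.Walk.IsPath.nil, rfl, ?_⟩
    intro w hw
    simp only [SimpleGraph.Walk.support_nil, List.mem_singleton] at hw
    subst hw
    exact ⟨hr, Or.inl rfl⟩
  | succ j ih =>
    intro hjk u hr hd
    obtain ⟨v, hadj, hrv, hdv⟩ := exists_parent hr hd
    obtain ⟨p', hp'path, hp'len, hp'sup⟩ := ih (by omega) v hrv hdv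
    have hball : (ballGraph G x k).Adj u v :=
      ⟨hadj, Or.inr ⟨hrv, by omega⟩⟩
    refine ⟨SimpleGraph.Walk.cons hball p', ?_, ?_, ?_⟩
    · rw [SimpleGraph.Walk.cons_isPath_iff]
      refine ⟨hp'path, fun hmem => ?_⟩
      rcases (hp'sup u hmem).2 with h | h
      · subst h; exact G.irrefl hadj
      · omega
    · rw [SimpleGraph.Walk.length_cons, hp'len]
    · intro w hw
      rw [SimpleGraph.Walk.support_cons, List.mem_cons] at hw
      rcases hw with rfl | hw
      · exact ⟨hr, Or.inl rfl⟩
      · obtain ⟨hwr, hwd⟩ := hp'sup w hw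
        refine ⟨hwr, Or.inr ?_⟩
        rcases hwd with rfl | h
        · omega
        · omega

variable (hacyclic : (ballGraph G x k).IsAcyclic)

lemma parent_unique (hacyclic : (ballGraph G x k).IsAcyclic)
    {y u v : Fin n} {j : ℕ} (hjk : j + 1 ≤ k)
    (hry : G.Reachable x y) (hdy : G.dist x y = j+1)
    (hu : G.Adj y u) (hru : G.Reachable x u) (hdu : G.dist x u = j)
    (hv : G.Adj y v) (hrv : G.Reachable x v) (hdv : G.dist x v = j) : u = v := by
  obtain ⟨pu, hpu_path, hpu_len, hpu_sup⟩ := exists_ball_path (k := k) j (by omega) u hru hdu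
  obtain ⟨pv, hpv_path, hpv_len, hpv_sup⟩ := exists_ball_path (k := k) j (by omega) v hrv hdv
  have hballu : (ballGraph G x k).Adj y u := ⟨hu, Or.inr ⟨hru, by omega⟩⟩
  have hballv : (ballGraph G x k).Adj y v := ⟨hv, Or.inr ⟨hrv, by omega⟩⟩
  have hyu : y ∉ pu.support := by
    intro hmem
    rcases (hpu_sup y hmem).2 with h | h
    · subst h; omega
    · omega
  have hyv : y ∉ pv.support := by
    intro hmem
    rcases (hpv_sup y hmem).2 with h | h
    · subst h; omega
    · omega
  have hP1 : (SimpleGraph.Walk.cons hballu pu).IsPath :=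
    (SimpleGraph.Walk.cons_isPath_iff _ _).mpr ⟨hpu_path, hyu⟩
  have hP2 : (SimpleGraph.Walk.cons hballv pv).IsPath :=
    (SimpleGraph.Walk.cons_isPath_iff _ _).mpr ⟨hpv_path, hyv⟩
  have := hacyclic.path_unique ⟨_, hP1⟩ ⟨_, hP2⟩
  have hwalk : SimpleGraph.Walk.cons hballu pu = SimpleGraph.Walk.cons hballv pv :=
    congrArg Subtype.val this
  have hsup := congrArg SimpleGraph.Walk.support hwalk
  rw [SimpleGraph.Walk.support_cons, SimpleGraph.Walk.support_cons] at hsup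
  have htail : pu.support = pv.support := by
    injection hsup
  have h1 : pu.support = u :: pu.support.tail := SimpleGraph.Walk.support_eq_cons pu
  have h2 : pv.support = v :: pv.support.tail := SimpleGraph.Walk.support_eq_cons pv
  rw [h1, h2] at htail
  injection htail

lemma no_same_level (hacyclic : (ballGraph G x k).IsAcyclic)
    {u v : Fin n} {j : ℕ} (hjk : j < k)
    (hru : G.Reachable x u) (hdu : G.dist x u = j)
    (hrv : G.Reachable x v) (hdv : G.dist x v = j)
    (hadj : G.Adj u v) : False := by
  obtain ⟨pu, hpu_path, hpu_len, hpu_sup⟩ := exists_ball_path (k := k) j hjk u hru hdu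
  obtain ⟨pv, hpv_path, hpv_len, hpv_sup⟩ := exists_ball_path (k := k) j hjk v hrv hdv
  have hball : (ballGraph G x k).Adj v u := ⟨hadj.symm, Or.inr ⟨hru, by omega⟩⟩
  have hvu : v ∉ pu.support := by
    intro hmem
    rcases (hpu_sup v hmem).2 with h | h
    · exact hadj.ne h.symm
    · omega
  have hP1 : (SimpleGraph.Walk.cons hball pu).IsPath :=
    (SimpleGraph.Walk.cons_isPath_iff _ _).mpr ⟨hpu_path, hvu⟩
  have := hacyclic.path_unique ⟨_, hP1⟩ ⟨_, hpv_path⟩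
  have hwalk : SimpleGraph.Walk.cons hball pu = pv := congrArg Subtype.val this
  have hlen := congrArg SimpleGraph.Walk.length hwalk
  rw [SimpleGraph.Walk.length_cons, hpu_len, hpv_len] at hlen
  omega

section Counting

variable [DecidableRel G.Adj]

lemma count_parent (hacyclic : (ballGraph G x k).IsAcyclic)
    {y : Fin n} {j : ℕ} (hjk : j + 1 ≤ k)
    (hry : G.Reachable x y) (hdy : G.dist x y = j+1) :
    ((G.neighborFinset y).filter (fun w => G.Reachable x w ∧ G.dist x w = j)).card = 1 := by
  obtain ⟨v, hadj, hrv, hdv⟩ := exists_parent hry hdy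
  rw [Finset.card_eq_one]
  refine ⟨v, Finset.eq_singleton_iff_unique_mem.mpr ⟨?_, ?_⟩⟩
  · rw [Finset.mem_filter, SimpleGraph.mem_neighborFinset]
    exact ⟨hadj, hrv, hdv⟩
  · intro w hw
    rw [Finset.mem_filter, SimpleGraph.mem_neighborFinset] at hw
    exact parent_unique hacyclic hjk hry hdy hw.1 hw.2.1 hw.2.2 hadj hrv hdv

lemma trichotomy_of_adj {u w : Fin n} {j : ℕ} (hr : G.Reachable x u)
    (hd : G.dist x u = j) (h : G.Adj u w) :
    G.Reachable x w ∧ (G.dist x w + 1 = j ∨ G.dist x w = j ∨ G.dist x w = j + 1) := by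
  have hrw : G.Reachable x w := reach_of_adj hr h
  have h1 : G.dist x w ≤ G.dist x u + 1 := dist_le_succ_of_adj hr h
  have h2 : G.dist x u ≤ G.dist x w + 1 := dist_le_succ_of_adj hrw h.symm
  exact ⟨hrw, by omega⟩

lemma count_children (hacyclic : (ballGraph G x k).IsAcyclic)
    (hreg : G.IsRegularOfDegree d)
    {u : Fin n} {j : ℕ} (hjk : j < k)
    (hr : G.Reachable x u) (hd : G.dist x u = j) :
    ((G.neighborFinset u).filter (fun w => G.Reachable x w ∧ G.dist x w = j+1)).card
      = d - (if j = 0 then 0 else 1) := by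
  have hcard : (G.neighborFinset u).card = d := hreg u
  match j with
  | 0 =>
    have hux : u = x := by
      rcases dist_eq_zero_iff_eq_or_not_reachable.mp hd with h | h
      · exact h.symm
      · exact absurd hr h
    have he : d - (if (0:ℕ) = 0 then 0 else 1) = d := by norm_num
    rw [he, ← hcard]
    congr 1
    apply Finset.filter_true_of_mem
    intro w hw
    rw [SimpleGraph.mem_neighborFinset] at hw
    obtain ⟨hrw, htri⟩ := trichotomy_of_adj hr hd hw
    refine ⟨hrw, ?_⟩
    have hne : G.dist x w ≠ 0 := by
      intro h0
      have hwx : w = x := by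
        rcases dist_eq_zero_iff_eq_or_not_reachable.mp h0 with h | h
        · exact h.symm
        · exact absurd hrw h
      rw [hwx, hux] at hw
      exact G.irrefl hw
    omega
  | (j'+1) =>
    have key : ∀ w ∈ G.neighborFinset u, G.Reachable x w ∧
        (G.dist x w = j' ∨ G.dist x w = j'+1 ∨ G.dist x w = j'+2) := by
      intro w hw
      rw [SimpleGraph.mem_neighborFinset] at hw
      obtain ⟨hrw, htri⟩ := trichotomy_of_adj hr hd hw
      exact ⟨hrw, by omega⟩
    have hnosame : ∀ w ∈ G.neighborFinset u, ¬ (G.Reachable x w ∧ G.dist x w = j'+1) := by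
      intro w hw ⟨hrw, hdw⟩
      rw [SimpleGraph.mem_neighborFinset] at hw
      exact no_same_level hacyclic hjk hr hd hrw hdw hw
    have h0 := Finset.card_filter_add_card_filter_not
      (s := G.neighborFinset u) (fun w => G.Reachable x w ∧ G.dist x w = j')
    have hneg : (G.neighborFinset u).filter
        (fun w => ¬(G.Reachable x w ∧ G.dist x w = j'))
        = (G.neighborFinset u).filter (fun w => G.Reachable x w ∧ G.dist x w = j'+1+1) := by
      apply Finset.filter_congr
      intro w hw
      obtain ⟨hrw, htri⟩ := key w hw
      have hns := hnosame w hw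
      constructor
      · intro hnp
        refine ⟨hrw, ?_⟩
        rcases htri with h | h | h
        · exact absurd ⟨hrw, h⟩ hnp
        · exact absurd ⟨hrw, h⟩ hns
        · omega
      · intro ⟨_, hdw⟩ ⟨_, hdw'⟩
        omega
    rw [hneg] at h0
    have hpar : ((G.neighborFinset u).filter
        (fun w => G.Reachable x w ∧ G.dist x w = j')).card = 1 :=
      count_parent hacyclic (by omega) hr hd
    rw [hpar, hcard] at h0
    rw [if_neg (by omega : ¬ j'+1 = 0)]
    omega

lemma sph_card_succ (hacyclic : (ballGraph G x k).IsAcyclic)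
    (hreg : G.IsRegularOfDegree d) {j : ℕ} (hjk : j + 1 ≤ k) :
    (sph G x (j+1)).card = (d - (if j = 0 then 0 else 1)) * (sph G x j).card := by
  have swap : ∑ y ∈ sph G x j, ∑ z ∈ sph G x (j+1), (if G.Adj y z then (1:ℕ) else 0)
      = ∑ z ∈ sph G x (j+1), ∑ y ∈ sph G x j, (if G.Adj y z then (1:ℕ) else 0) :=
    Finset.sum_comm
  have lhs_eq : ∑ y ∈ sph G x j, ∑ z ∈ sph G x (j+1), (if G.Adj y z then (1:ℕ) else 0)
      = (d - (if j = 0 then 0 else 1)) * (sph G x j).card := by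
    have inner : ∀ y ∈ sph G x j, (∑ z ∈ sph G x (j+1), if G.Adj y z then (1:ℕ) else 0)
        = d - (if j = 0 then 0 else 1) := by
      intro y hy
      obtain ⟨hry, hdy⟩ := mem_sph.mp hy
      have hset : (sph G x (j+1)).filter (fun z => G.Adj y z)
          = (G.neighborFinset y).filter (fun w => G.Reachable x w ∧ G.dist x w = j+1) := by
        ext w
        rw [Finset.mem_filter, Finset.mem_filter, SimpleGraph.mem_neighborFinset, mem_sph]
        tauto
      rw [Finset.sum_boole, Nat.cast_id, hset, count_children hacyclic hreg (by omega) hry hdy]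
    rw [Finset.sum_congr rfl inner, Finset.sum_const, smul_eq_mul, mul_comm]
  have rhs_eq : ∑ z ∈ sph G x (j+1), ∑ y ∈ sph G x j, (if G.Adj y z then (1:ℕ) else 0)
      = (sph G x (j+1)).card := by
    have inner : ∀ z ∈ sph G x (j+1), (∑ y ∈ sph G x j, if G.Adj y z then (1:ℕ) else 0) = 1 := by
      intro z hz
      obtain ⟨hrz, hdz⟩ := mem_sph.mp hz
      have hset : (sph G x j).filter (fun y => G.Adj y z)
          = (G.neighborFinset z).filter (fun w => G.Reachable x w ∧ G.dist x w = j) := by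
        ext w
        rw [Finset.mem_filter, Finset.mem_filter, SimpleGraph.mem_neighborFinset, mem_sph]
        constructor
        · rintro ⟨⟨h1, h2⟩, h3⟩
          exact ⟨h3.symm, h1, h2⟩
        · rintro ⟨h1, h2, h3⟩
          exact ⟨⟨h2, h3⟩, h1.symm⟩
      rw [Finset.sum_boole, Nat.cast_id, hset, count_parent hacyclic hjk hrz hdz]
    rw [Finset.sum_congr rfl inner, Finset.sum_const, smul_eq_mul, mul_one]
  rw [lhs_eq, rhs_eq] at swap
  exact swap.symm

lemma sph_card (hacyclic : (ballGraph G x k).IsAcyclic)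
    (hreg : G.IsRegularOfDegree d) (hd3 : 3 ≤ d) :
    ∀ j, j ≤ k → ((sph G x j).card : ℝ) = nn (d:ℝ) j := by
  intro j
  induction j with
  | zero =>
    intro _
    rw [sph_zero]
    simp [nn]
  | succ j ih =>
    intro hjk
    rw [sph_card_succ hacyclic hreg hjk]
    match j with
    | 0 =>
      have he : (d - (if (0:ℕ) = 0 then 0 else 1)) * (sph G x 0).card = d := by
        rw [sph_zero]; norm_num
      rw [he]
      show ((d:ℕ):ℝ) = (d:ℝ) * ((d:ℝ)-1)^0
      norm_num
    | (j'+1) =>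
      rw [if_neg (by omega : ¬ j'+1 = 0)]
      push_cast [Nat.cast_sub (by omega : 1 ≤ d)]
      rw [ih (by omega)]
      rw [nn_succ_succ]

end Counting


end
section


/-- Generic single-step regrouping of Jacobi-type sums. -/
lemma step_sum (D : ℝ) (v w : ℕ → ℝ) (hw : ∀ j, w j = v (j+1) + bb D j * v (j-1)) (m : ℕ) :
    ∑ j ∈ Finset.range (m+1), cc D m j * w j
      = ∑ i ∈ Finset.range (m+2), cc D (m+1) i * v i := by
  have expand : ∀ j ∈ Finset.range (m+1), cc D m j * w j
      = cc D m j * v (j+1) + cc D m j * bb D j * v (j-1) := by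
    intro j _; rw [hw]; ring
  rw [Finset.sum_congr rfl expand, Finset.sum_add_distrib]
  have s1 : ∑ j ∈ Finset.range (m+1), cc D m j * v (j+1)
      = ∑ i ∈ Finset.range (m+2), (if i = 0 then 0 else cc D m (i-1) * v i) := by
    rw [Finset.sum_range_succ' (fun i => if i = 0 then 0 else cc D m (i-1) * v i) (m+1)]
    simp
  have s2 : ∑ j ∈ Finset.range (m+1), cc D m j * bb D j * v (j-1)
      = ∑ i ∈ Finset.range (m+2), cc D m (i+1) * bb D (i+1) * v i := by
    have hbb0 : bb D 0 = 0 := rfl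
    rw [Finset.sum_range_succ' (fun j => cc D m j * bb D j * v (j-1)) m]
    conv_rhs => rw [Finset.sum_range_succ, Finset.sum_range_succ]
    rw [cc_eq_zero D m (m+1) (by omega), cc_eq_zero D m (m+2) (by omega)]
    simp [hbb0]
  rw [s1, s2, ← Finset.sum_add_distrib]
  apply Finset.sum_congr rfl
  intro i _
  by_cases hi : i = 0
  · subst hi
    simp only [if_pos]
    have hc : cc D (m+1) 0 = D * cc D m 1 := by simp [cc]
    have hb1 : bb D 1 = D := rfl
    rw [hc, hb1]; ring
  · simp only [if_neg hi]
    have : cc D (m+1) i = cc D m (i-1) + (D-1) * cc D m (i+1) := by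
      simp [cc, if_neg hi]
    rw [this]
    obtain ⟨i', rfl⟩ : ∃ i', i = i' + 1 := ⟨i - 1, by omega⟩
    have : bb D (i'+1+1) = D - 1 := rfl
    rw [this]
    simp only [Nat.add_sub_cancel]
    ring

variable {n d k : ℕ} {G : SimpleGraph (Fin n)} {x : Fin n} [DecidableRel G.Adj]

lemma mulVec_chi (hacyclic : (ballGraph G x k).IsAcyclic)
    (hreg : G.IsRegularOfDegree d) (hd3 : 3 ≤ d) {j : ℕ} (hj : j + 1 ≤ k) :
    (G.adjMatrix ℝ).mulVec (chi G x j) = chi G x (j+1) + bb (d:ℝ) j • chi G x (j-1) := by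
  funext y
  rw [SimpleGraph.adjMatrix_mulVec_apply]
  have hsum : (∑ w ∈ G.neighborFinset y, chi G x j w)
      = (((G.neighborFinset y).filter
          (fun w => G.Reachable x w ∧ G.dist x w = j)).card : ℝ) := by
    unfold chi
    rw [Finset.sum_boole]
    congr 2
    apply Finset.filter_congr
    intro w _
    rw [mem_sph]
  rw [hsum]
  show _ = chi G x (j+1) y + bb (d:ℝ) j * chi G x (j-1) y
  by_cases h1 : y ∈ sph G x (j+1)
  · obtain ⟨hry, hdy⟩ := mem_sph.mp h1
    rw [count_parent hacyclic hj hry hdy]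
    have h2 : y ∉ sph G x (j-1) := by
      intro hmem
      obtain ⟨_, hd2⟩ := mem_sph.mp hmem
      omega
    unfold chi
    rw [if_pos h1, if_neg h2]
    norm_num
  · by_cases h2 : y ∈ sph G x (j-1) ∧ j ≠ 0
    · obtain ⟨h2m, hj0⟩ := h2
      obtain ⟨j', rfl⟩ : ∃ j', j = j' + 1 := ⟨j - 1, by omega⟩
      obtain ⟨hry, hdy⟩ := mem_sph.mp (by simpa using h2m)
      rw [count_children hacyclic hreg (by omega) hry hdy]
      unfold chi
      rw [if_neg h1, if_pos h2m]
      match j' with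
      | 0 =>
        have : bb (d:ℝ) 1 = (d:ℝ) := rfl
        rw [this]
        norm_num
      | (j''+1) =>
        have : bb (d:ℝ) (j''+1+1) = (d:ℝ) - 1 := rfl
        rw [this]
        rw [if_neg (by omega : ¬ j''+1 = 0)]
        push_cast [Nat.cast_sub (by omega : 1 ≤ d)]
        ring
    · have hcard : ((G.neighborFinset y).filter
          (fun w => G.Reachable x w ∧ G.dist x w = j)) = ∅ := by
        rw [Finset.filter_eq_empty_iff]
        intro w hw ⟨hrw, hdw⟩
        rw [SimpleGraph.mem_neighborFinset] at hw
        obtain ⟨hry, htri⟩ := trichotomy_of_adj hrw hdw hw.symm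
        rcases htri with h | h | h
        · -- dist y + 1 = j, so y ∈ sph (j-1) and j ≠ 0
          exact h2 ⟨mem_sph.mpr ⟨hry, by omega⟩, by omega⟩
        · exact no_same_level hacyclic (by omega) hrw hdw hry h hw.symm
        · exact h1 (mem_sph.mpr ⟨hry, h⟩)
      rw [hcard]
      unfold chi
      rw [if_neg h1]
      by_cases hj0 : j = 0
      · subst hj0
        have : bb (d:ℝ) 0 = 0 := rfl
        rw [this]
        norm_num
      · rw [if_neg (fun hmem => h2 ⟨hmem, hj0⟩)]
        norm_num

lemma powVec (hacyclic : (ballGraph G x k).IsAcyclic)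
    (hreg : G.IsRegularOfDegree d) (hd3 : 3 ≤ d) :
    ∀ a, a ≤ k → ((G.adjMatrix ℝ)^a).mulVec (chi G x 0)
      = fun y => ∑ j ∈ Finset.range (a+1), cc (d:ℝ) a j * chi G x j y := by
  intro a
  induction a with
  | zero =>
    intro _
    funext y
    rw [pow_zero, Matrix.one_mulVec]
    simp [cc]
  | succ a ih =>
    intro hak
    have h1 : ((G.adjMatrix ℝ)^(a+1)).mulVec (chi G x 0)
        = (G.adjMatrix ℝ).mulVec (((G.adjMatrix ℝ)^a).mulVec (chi G x 0)) := by
      rw [Matrix.mulVec_mulVec, ← pow_succ']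
    rw [h1, ih (by omega)]
    funext y
    rw [SimpleGraph.adjMatrix_mulVec_apply]
    have swap : ∑ u ∈ G.neighborFinset y, ∑ j ∈ Finset.range (a+1), cc (d:ℝ) a j * chi G x j u
        = ∑ j ∈ Finset.range (a+1), cc (d:ℝ) a j * ∑ u ∈ G.neighborFinset y, chi G x j u := by
      rw [Finset.sum_comm]
      exact Finset.sum_congr rfl (fun j _ => by rw [Finset.mul_sum])
    rw [swap]
    have happ : ∀ j ∈ Finset.range (a+1),
        cc (d:ℝ) a j * ∑ u ∈ G.neighborFinset y, chi G x j u
        = cc (d:ℝ) a j * (chi G x (j+1) y + bb (d:ℝ) j * chi G x (j-1) y) := by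
      intro j hj
      rw [Finset.mem_range] at hj
      have := mulVec_chi hacyclic hreg hd3 (j := j) (by omega)
      have happly := congrFun this y
      rw [SimpleGraph.adjMatrix_mulVec_apply] at happly
      rw [happly]
      rfl
    rw [Finset.sum_congr rfl happ]
    exact step_sum (d:ℝ) (fun j => chi G x j y)
      (fun j => chi G x (j+1) y + bb (d:ℝ) j * chi G x (j-1) y) (fun j => rfl) a

lemma chi_dot (i j : ℕ) :
    (∑ y : Fin n, chi G x j y * chi G x i y)
      = if i = j then ((sph G x j).card : ℝ) else 0 := by
  by_cases hij : i = j
  · subst hij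
    rw [if_pos rfl]
    have : ∀ y : Fin n, chi G x i y * chi G x i y = if y ∈ sph G x i then 1 else 0 := by
      intro y
      unfold chi
      by_cases hy : y ∈ sph G x i <;> simp [hy]
    rw [Finset.sum_congr rfl (fun y _ => this y), Finset.sum_boole]
    congr 1
    rw [Finset.filter_univ_mem]
  · rw [if_neg hij]
    apply Finset.sum_eq_zero
    intro y _
    unfold chi
    by_cases hy1 : y ∈ sph G x j
    · have hy2 : y ∉ sph G x i := by
        intro hy2
        obtain ⟨_, hd1⟩ := mem_sph.mp hy1
        obtain ⟨_, hd2⟩ := mem_sph.mp hy2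
        exact hij (by omega)
      rw [if_pos hy1, if_neg hy2, mul_zero]
    · rw [if_neg hy1, zero_mul]

theorem walk_count (hacyclic : (ballGraph G x k).IsAcyclic)
    (hreg : G.IsRegularOfDegree d) (hd3 : 3 ≤ d) (hk : 1 ≤ k)
    {m : ℕ} (hm : m ≤ 2 * k) :
    ((G.adjMatrix ℝ) ^ m) x x = cc (d:ℝ) m 0 := by
  set a := min m k with ha
  set b := m - a with hb
  have hchoice : a = m ∨ a = k := min_choice m k
  have ham : a ≤ m := min_le_left _ _
  have hak : a ≤ k := min_le_right _ _
  have hbk : b ≤ k := by omega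
  have hab : a + b = m := by omega
  -- matrix entry as a dot product of two mulVec's
  have hchi0 : ∀ (M : Matrix (Fin n) (Fin n) ℝ) (y : Fin n),
      M.mulVec (chi G x 0) y = M y x := by
    intro M y
    have : chi G x 0 = fun u => if u = x then 1 else 0 := by
      funext u
      unfold chi
      rw [sph_zero]
      simp
    rw [this]
    simp [Matrix.mulVec, dotProduct]
  have hsym : ∀ (c : ℕ) (y : Fin n), ((G.adjMatrix ℝ)^c) x y = ((G.adjMatrix ℝ)^c) y x := by
    intro c y
    have hA : Matrix.transpose (G.adjMatrix ℝ) = G.adjMatrix ℝ := G.isSymm_adjMatrix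
    have h1 : Matrix.transpose ((G.adjMatrix ℝ)^c) = (G.adjMatrix ℝ)^c := by
      rw [Matrix.transpose_pow, hA]
    conv_lhs => rw [← h1]
    rfl
  have key : ((G.adjMatrix ℝ) ^ m) x x
      = ∑ y : Fin n, (((G.adjMatrix ℝ)^a).mulVec (chi G x 0) y)
        * (((G.adjMatrix ℝ)^b).mulVec (chi G x 0) y) := by
    rw [← hab, pow_add, Matrix.mul_apply]
    apply Finset.sum_congr rfl
    intro y _
    rw [hchi0, hchi0, hsym a y]
  rw [key, powVec hacyclic hreg hd3 a hak, powVec hacyclic hreg hd3 b hbk]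
  have expand : ∑ y : Fin n,
      (∑ j ∈ Finset.range (a+1), cc (d:ℝ) a j * chi G x j y)
        * (∑ i ∈ Finset.range (b+1), cc (d:ℝ) b i * chi G x i y)
      = ∑ j ∈ Finset.range (a+1), ∑ i ∈ Finset.range (b+1),
          cc (d:ℝ) a j * cc (d:ℝ) b i * ∑ y : Fin n, chi G x j y * chi G x i y := by
    have e1 : ∀ y : Fin n,
        (∑ j ∈ Finset.range (a+1), cc (d:ℝ) a j * chi G x j y)
          * (∑ i ∈ Finset.range (b+1), cc (d:ℝ) b i * chi G x i y)
        = ∑ j ∈ Finset.range (a+1), ∑ i ∈ Finset.range (b+1),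
            (cc (d:ℝ) a j * chi G x j y) * (cc (d:ℝ) b i * chi G x i y) :=
      fun y => Finset.sum_mul_sum _ _ _ _
    rw [Finset.sum_congr rfl (fun y _ => e1 y), Finset.sum_comm]
    apply Finset.sum_congr rfl
    intro j _
    rw [Finset.sum_comm]
    apply Finset.sum_congr rfl
    intro i _
    rw [Finset.mul_sum]
    apply Finset.sum_congr rfl
    intro y _
    ring
  rw [expand]
  have inner : ∀ j ∈ Finset.range (a+1),
      (∑ i ∈ Finset.range (b+1),
        cc (d:ℝ) a j * cc (d:ℝ) b i * ∑ y : Fin n, chi G x j y * chi G x i y)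
      = cc (d:ℝ) a j * cc (d:ℝ) b j * ((sph G x j).card : ℝ) := by
    intro j _
    have e : ∀ i ∈ Finset.range (b+1),
        cc (d:ℝ) a j * cc (d:ℝ) b i * (∑ y : Fin n, chi G x j y * chi G x i y)
        = if i = j then cc (d:ℝ) a j * cc (d:ℝ) b j * ((sph G x j).card:ℝ) else 0 := by
      intro i _
      rw [chi_dot]
      by_cases h : i = j
      · subst h; rw [if_pos rfl, if_pos rfl]
      · rw [if_neg h, if_neg h, mul_zero]
    rw [Finset.sum_congr rfl e, Finset.sum_ite_eq' (Finset.range (b+1)) j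
      (fun _ => cc (d:ℝ) a j * cc (d:ℝ) b j * ((sph G x j).card:ℝ))]
    by_cases hjb : j ∈ Finset.range (b+1)
    · rw [if_pos hjb]
    · rw [if_neg hjb]
      rw [Finset.mem_range] at hjb
      rw [cc_eq_zero (d:ℝ) b j (by omega)]
      ring
  rw [Finset.sum_congr rfl inner]
  have cards : ∀ j ∈ Finset.range (a+1),
      cc (d:ℝ) a j * cc (d:ℝ) b j * ((sph G x j).card:ℝ)
      = cc (d:ℝ) a j * cc (d:ℝ) b j * nn (d:ℝ) j := by
    intro j hj
    rw [Finset.mem_range] at hj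
    rw [sph_card hacyclic hreg hd3 j (by omega)]
  rw [Finset.sum_congr rfl cards]
  have hext : ∑ j ∈ Finset.range (a+1), cc (d:ℝ) a j * cc (d:ℝ) b j * nn (d:ℝ) j
      = ∑ j ∈ Finset.range (a+b+2), cc (d:ℝ) a j * cc (d:ℝ) b j * nn (d:ℝ) j := by
    apply Finset.sum_subset (Finset.range_subset_range.mpr (by omega))
    intro j _ hj
    rw [Finset.mem_range] at hj
    rw [cc_eq_zero (d:ℝ) a j (by omega)]
    ring
  rw [hext]
  have := Sab_eq (d:ℝ) a b (a+b+2) (le_refl _)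
  unfold Sab at this
  rw [this, hab]


end

end KM17

/-- If the ball `B_k(x)` in a `d`-regular graph is acyclic, then the number of closed walks at
`x` of length `m ≤ 2k` equals the `m`-th moment of the Kesten–McKay measure. -/
theorem stmt17 (d n : ℕ) (hd : 3 ≤ d) (G : SimpleGraph (Fin n)) [DecidableRel G.Adj]
    (hreg : G.IsRegularOfDegree d) (x : Fin n) (k : ℕ) (hk : 1 ≤ k)
    (hacyclic : (ballGraph G x k).IsAcyclic) (m : ℕ) (hm : m ≤ 2 * k) :
    ((G.adjMatrix ℝ) ^ m) x x = ∫ l : ℝ, l ^ m ∂(kmMeasure d) := by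
  rw [KM17.km_moment hd m]
  exact KM17.walk_count hacyclic hreg hd hk hm

end
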